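/- arXiv:2105.04750 — 13 statements merged into one kernel-verified Lean document; each statement's English description precedes it below -/
import Mathlib

section
/- Consider the discrete-time networked SIR model under Assumptions 1 and 2. Then for every node i ∈ V and every time step k ∈ ℤ≥0, the states satisfy s_i[k] ∈ [0,1], x_i[k] ∈ [0,1], r_i[k] ∈ [0,1], and s_i[k] + x_i[k] + r_i[k] = 1. -/
/-!
Discrete-time networked SIR model (Section 2 of the paper).

Nodes are `Fin n`.  `E j i` means there is a directed edge `(j,i)` from `j` to `i`
(self-loops allowed).  Since the weights satisfy `a i j = 0` whenever
`j ∉ N̄_i = {j : E j i} ∪ {i}`, the sum `∑_{j ∈ N̄_i} a_{ij} x_j[k]` coincides with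
`∑ j, a i j * x j k`.
-/

/-- Under Assumptions 1 and 2, for every node `i` and time `k`,
`s_i[k], x_i[k], r_i[k] ∈ [0,1]` and `s_i[k] + x_i[k] + r_i[k] = 1`. -/
theorem sir_states_in_unit_interval_and_sum_one
    {n : ℕ} (E : Fin n → Fin n → Prop) (a : Fin n → Fin n → ℝ)
    (h β δ : ℝ) (s x r : Fin n → ℕ → ℝ)
    -- SIR dynamics
    (hdynS : ∀ i k, s i (k + 1) = s i k - h * s i k * β * ∑ j, a i j * x j k)
    (hdynX : ∀ i k, x i (k + 1) = (1 - h * δ) * x i k + h * s i k * β * ∑ j, a i j * x j k)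
    (hdynR : ∀ i k, r i (k + 1) = r i k + h * δ * x i k)
    -- Assumption 1 (initial conditions)
    (hs0 : ∀ i, 0 < s i 0 ∧ s i 0 ≤ 1)
    (hx0 : ∀ i, 0 ≤ x i 0 ∧ x i 0 < 1)
    (hr0 : ∀ i, r i 0 = 0)
    (hsum0 : ∀ i, s i 0 + x i 0 = 1)
    -- Assumption 2 (model parameters)
    (hh : 0 < h) (hβ : 0 < β) (hδ : 0 < δ) (hhδ : h * δ < 1)
    (haE : ∀ i j, E j i → 0 < a i j)
    (haNonneg : ∀ i j, 0 ≤ a i j)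
    (haZero : ∀ i j, ¬ E j i → j ≠ i → a i j = 0)
    (hRow : ∀ i, h * β * ∑ j, a i j < 1) :
    ∀ (i : Fin n) (k : ℕ),
      s i k ∈ Set.Icc (0 : ℝ) 1 ∧ x i k ∈ Set.Icc (0 : ℝ) 1 ∧
        r i k ∈ Set.Icc (0 : ℝ) 1 ∧ s i k + x i k + r i k = 1 := by
  -- Strengthened invariant: all three are nonneg and sum to 1.
  have key : ∀ k, ∀ i, 0 ≤ s i k ∧ 0 ≤ x i k ∧ 0 ≤ r i k ∧ s i k + x i k + r i k = 1 := by
    intro k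
    induction k with
    | zero =>
        intro i
        refine ⟨(hs0 i).1.le, (hx0 i).1, ?_, ?_⟩
        · rw [hr0 i]
        · rw [hr0 i, hsum0 i]; ring
    | succ k ih =>
        intro i
        obtain ⟨hsk, hxk, hrk, hsum⟩ := ih i
        have hsle1 : s i k ≤ 1 := by nlinarith
        have hxle1 : ∀ j, x j k ≤ 1 := fun j => by
          obtain ⟨hs', hx', hr', hsum'⟩ := ih j; nlinarith
        have hSnn : 0 ≤ ∑ j, a i j * x j k :=
          Finset.sum_nonneg fun j _ => mul_nonneg (haNonneg i j) ((ih j).2.1)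
        have hSle : ∑ j, a i j * x j k ≤ ∑ j, a i j :=
          Finset.sum_le_sum fun j _ => by
            have := mul_le_of_le_one_right (haNonneg i j) (hxle1 j)
            linarith
        have hterm_nn : 0 ≤ h * s i k * β * ∑ j, a i j * x j k :=
          mul_nonneg (mul_nonneg (mul_nonneg hh.le hsk) hβ.le) hSnn
        have hterm_le : h * s i k * β * ∑ j, a i j * x j k ≤ s i k := by
          have h1 : h * β * ∑ j, a i j * x j k ≤ h * β * ∑ j, a i j := by
            have : 0 ≤ h * β := mul_nonneg hh.le hβ.le
            nlinarith
          have h2 : h * β * ∑ j, a i j * x j k ≤ 1 := le_of_lt (lt_of_le_of_lt h1 (hRow i))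
          calc h * s i k * β * ∑ j, a i j * x j k
              = s i k * (h * β * ∑ j, a i j * x j k) := by ring
            _ ≤ s i k * 1 := by
                apply mul_le_mul_of_nonneg_left h2 hsk
            _ = s i k := mul_one _
        refine ⟨?_, ?_, ?_, ?_⟩
        · rw [hdynS]; linarith
        · rw [hdynX]
          have : 0 ≤ (1 - h * δ) * x i k :=
            mul_nonneg (by linarith) hxk
          linarith
        · rw [hdynR]
          have : 0 ≤ h * δ * x i k := mul_nonneg (mul_nonneg hh.le hδ.le) hxk
          linarith
        · rw [hdynS, hdynX, hdynR]; linarith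
  intro i k
  obtain ⟨hsk, hxk, hrk, hsum⟩ := key k i
  exact ⟨⟨hsk, by nlinarith⟩, ⟨hxk, by nlinarith⟩, ⟨hrk, by nlinarith⟩, hsum⟩
end

section
/- Consider the discrete-time networked SIR model under Assumptions 1 and 2. Then for every node i ∈ V and every time step k ∈ ℤ≥0, s_i[k] > 0. -/
/-!
Discrete-time networked SIR model (Section 2 of the paper).

Nodes are `Fin n`.  `E j i` means there is a directed edge `(j,i)` from `j` to `i`
(self-loops allowed).  Since the weights satisfy `a i j = 0` whenever
`j ∉ N̄_i = {j : E j i} ∪ {i}`, the sum `∑_{j ∈ N̄_i} a_{ij} x_j[k]` coincides with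
`∑ j, a i j * x j k`.
-/

/-- Under Assumptions 1 and 2, for every node `i` and time `k`,
`s_i[k] > 0`. -/
theorem sir_susceptible_pos
    {n : ℕ} (E : Fin n → Fin n → Prop) (a : Fin n → Fin n → ℝ)
    (h β δ : ℝ) (s x r : Fin n → ℕ → ℝ)
    -- SIR dynamics
    (hdynS : ∀ i k, s i (k + 1) = s i k - h * s i k * β * ∑ j, a i j * x j k)
    (hdynX : ∀ i k, x i (k + 1) = (1 - h * δ) * x i k + h * s i k * β * ∑ j, a i j * x j k)
    (hdynR : ∀ i k, r i (k + 1) = r i k + h * δ * x i k)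
    -- Assumption 1 (initial conditions)
    (hs0 : ∀ i, 0 < s i 0 ∧ s i 0 ≤ 1)
    (hx0 : ∀ i, 0 ≤ x i 0 ∧ x i 0 < 1)
    (hr0 : ∀ i, r i 0 = 0)
    (hsum0 : ∀ i, s i 0 + x i 0 = 1)
    -- Assumption 2 (model parameters)
    (hh : 0 < h) (hβ : 0 < β) (hδ : 0 < δ) (hhδ : h * δ < 1)
    (haE : ∀ i j, E j i → 0 < a i j)
    (haNonneg : ∀ i j, 0 ≤ a i j)
    (haZero : ∀ i j, ¬ E j i → j ≠ i → a i j = 0)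
    (hRow : ∀ i, h * β * ∑ j, a i j < 1) :
    ∀ (i : Fin n) (k : ℕ), 0 < s i k := by
  have key : ∀ k, ∀ i, 0 < s i k ∧ 0 ≤ x i k ∧ s i k + x i k ≤ 1 := by
    intro k
    induction k with
    | zero =>
      intro i
      exact ⟨(hs0 i).1, (hx0 i).1, le_of_eq (hsum0 i)⟩
    | succ k ih =>
      intro i
      have hsk := (ih i).1
      have hxk := (ih i).2.1
      have hsumk := (ih i).2.2
      have hxle : ∀ j, x j k ≤ 1 := by
        intro j
        have := (ih j).1
        have := (ih j).2.2
        linarith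
      have hTnn : 0 ≤ ∑ j, a i j * x j k :=
        Finset.sum_nonneg fun j _ => mul_nonneg (haNonneg i j) (ih j).2.1
      have hTle : ∑ j, a i j * x j k ≤ ∑ j, a i j := by
        apply Finset.sum_le_sum
        intro j _
        calc a i j * x j k ≤ a i j * 1 :=
              mul_le_mul_of_nonneg_left (hxle j) (haNonneg i j)
          _ = a i j := mul_one _
      have hhβ : 0 < h * β := mul_pos hh hβ
      have hfac : h * β * ∑ j, a i j * x j k < 1 := by
        calc h * β * ∑ j, a i j * x j k ≤ h * β * ∑ j, a i j :=
              mul_le_mul_of_nonneg_left hTle (le_of_lt hhβ)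
          _ < 1 := hRow i
      have hspos : 0 < s i (k + 1) := by
        rw [hdynS i k]
        have : s i k - h * s i k * β * ∑ j, a i j * x j k
            = s i k * (1 - h * β * ∑ j, a i j * x j k) := by ring
        rw [this]
        exact mul_pos hsk (by linarith)
      have hxnn : 0 ≤ x i (k + 1) := by
        rw [hdynX i k]
        have h1 : 0 ≤ (1 - h * δ) * x i k :=
          mul_nonneg (by linarith) hxk
        have h2 : 0 ≤ h * s i k * β * ∑ j, a i j * x j k :=
          mul_nonneg (mul_nonneg (mul_nonneg hh.le hsk.le) hβ.le) hTnn
        linarith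
      have hsumle : s i (k + 1) + x i (k + 1) ≤ 1 := by
        rw [hdynS i k, hdynX i k]
        have : 0 ≤ h * δ * x i k := mul_nonneg (mul_nonneg hh.le hδ.le) hxk
        nlinarith
      exact ⟨hspos, hxnn, hsumle⟩
  intro i k
  exact (key k i).1
end

section
/- Consider the discrete-time networked SIR model under Assumptions 1 and 2. Let i ∈ V be a node with d_i ≠ +∞. Then x_i[k] = 0 for all time steps k < d_i, and x_i[k] ∈ (0,1) for all time steps k ≥ d_i. -/
/-!
Discrete-time networked SIR model (Section 2 of the paper).

Nodes are `Fin n`.  `E j i` means there is a directed edge `(j,i)` from `j` to `i`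
(self-loops allowed).  Since the weights satisfy `a i j = 0` whenever
`j ∉ N̄_i = {j : E j i} ∪ {i}`, the sum `∑_{j ∈ N̄_i} a_{ij} x_j[k]` coincides with
`∑ j, a i j * x j k`.
-/

/-- There is a directed walk of length `t` from node `j` to node `i` in the graph with
edge relation `E` (a directed path of length `t` is a sequence of `t` directed edges). -/
def HasWalk {n : ℕ} (E : Fin n → Fin n → Prop) (t : ℕ) (j i : Fin n) : Prop :=
  ∃ p : ℕ → Fin n, p 0 = j ∧ p t = i ∧ ∀ l < t, E (p l) (p (l + 1))

/-- `d_i` of Definition 3: the (extended-natural-number) distance from the initially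
infected set `S_I = {j : x_j[0] > 0}` to node `i`; it equals `0` if `i ∈ S_I`, the
shortest length of a directed path from some node of `S_I` to `i` if one exists,
and `⊤` (i.e. `+∞`) otherwise. -/
noncomputable def distToInfected {n : ℕ} (E : Fin n → Fin n → Prop)
    (x : Fin n → ℕ → ℝ) (i : Fin n) : ℕ∞ :=
  sInf {t : ℕ∞ | ∃ t' : ℕ, (t' : ℕ∞) = t ∧ ∃ j : Fin n, 0 < x j 0 ∧ HasWalk E t' j i}

lemma HasWalk.extend {n : ℕ} {E : Fin n → Fin n → Prop} {t : ℕ} {j l m : Fin n}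
    (hw : HasWalk E t j l) (he : E l m) : HasWalk E (t + 1) j m := by
  obtain ⟨p, h0, ht, hE⟩ := hw
  refine ⟨fun u => if u ≤ t then p u else m, by simp [h0], by simp, ?_⟩
  intro u hu
  rcases Nat.lt_or_ge u t with hc | hc
  · simp only [Nat.le_of_lt hc, Nat.succ_le_of_lt hc, if_true]
    exact hE u hc
  · have hut : u = t := le_antisymm (Nat.lt_succ_iff.mp hu) hc
    subst hut
    simp only [le_refl, if_true, Nat.not_succ_le_self, if_false, ht]
    exact he

/-- Lemma 1(b): Under Assumptions 1 and 2, if `d_i ≠ +∞`, then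
`x_i[k] = 0` for all `k < d_i` and `x_i[k] ∈ (0,1)` for all `k ≥ d_i`. -/
theorem sir_infected_zero_before_dist_pos_after
    {n : ℕ} (E : Fin n → Fin n → Prop) (a : Fin n → Fin n → ℝ)
    (h β δ : ℝ) (s x r : Fin n → ℕ → ℝ)
    -- SIR dynamics
    (hdynS : ∀ i k, s i (k + 1) = s i k - h * s i k * β * ∑ j, a i j * x j k)
    (hdynX : ∀ i k, x i (k + 1) = (1 - h * δ) * x i k + h * s i k * β * ∑ j, a i j * x j k)
    (hdynR : ∀ i k, r i (k + 1) = r i k + h * δ * x i k)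
    -- Assumption 1 (initial conditions)
    (hs0 : ∀ i, 0 < s i 0 ∧ s i 0 ≤ 1)
    (hx0 : ∀ i, 0 ≤ x i 0 ∧ x i 0 < 1)
    (hr0 : ∀ i, r i 0 = 0)
    (hsum0 : ∀ i, s i 0 + x i 0 = 1)
    -- Assumption 2 (model parameters)
    (hh : 0 < h) (hβ : 0 < β) (hδ : 0 < δ) (hhδ : h * δ < 1)
    (haE : ∀ i j, E j i → 0 < a i j)
    (haNonneg : ∀ i j, 0 ≤ a i j)
    (haZero : ∀ i j, ¬ E j i → j ≠ i → a i j = 0)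
    (hRow : ∀ i, h * β * ∑ j, a i j < 1)
    (i : Fin n) (hdi : distToInfected E x i ≠ ⊤) :
    (∀ k : ℕ, (k : ℕ∞) < distToInfected E x i → x i k = 0) ∧
      (∀ k : ℕ, distToInfected E x i ≤ (k : ℕ∞) → x i k ∈ Set.Ioo (0 : ℝ) 1) := by
  -- basic invariant
  have hinv : ∀ k, ∀ j, 0 < s j k ∧ 0 ≤ x j k ∧ 0 ≤ r j k ∧ s j k + x j k + r j k = 1 := by
    intro k
    induction k with
    | zero =>
      intro j
      refine ⟨(hs0 j).1, (hx0 j).1, le_of_eq (hr0 j).symm, ?_⟩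
      rw [hr0 j]; have := hsum0 j; linarith
    | succ k ih =>
      intro j
      have hxle : ∀ m, x m k ≤ 1 := by
        intro m; obtain ⟨h1, h2, h3, h4⟩ := ih m; linarith
      have hsumNN : 0 ≤ ∑ l, a j l * x l k :=
        Finset.sum_nonneg fun l _ => mul_nonneg (haNonneg j l) (ih l).2.1
      have hsumLe : ∑ l, a j l * x l k ≤ ∑ l, a j l := by
        refine Finset.sum_le_sum fun l _ => ?_
        have := haNonneg j l; have := hxle l; nlinarith
      have hcoef : h * β * ∑ l, a j l * x l k < 1 := by
        have h1 : h * β * ∑ l, a j l * x l k ≤ h * β * ∑ l, a j l := by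
          have : (0:ℝ) ≤ h * β := by positivity
          exact mul_le_mul_of_nonneg_left hsumLe this
        exact lt_of_le_of_lt h1 (hRow j)
      have hspos : 0 < s j (k + 1) := by
        rw [hdynS]
        have := (ih j).1
        nlinarith [mul_pos (ih j).1 (sub_pos.mpr hcoef)]
      have hxpos : 0 ≤ x j (k + 1) := by
        rw [hdynX]
        have h1 : 0 ≤ (1 - h * δ) * x j k := by
          have := (ih j).2.1; nlinarith
        have h2 : 0 ≤ h * s j k * β * ∑ l, a j l * x l k := by
          have := (ih j).1; positivity
        linarith
      have hrpos : 0 ≤ r j (k + 1) := by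
        rw [hdynR]
        have h1 := (ih j).2.2.1
        have h2 : 0 ≤ h * δ * x j k := mul_nonneg (by positivity) (ih j).2.1
        linarith
      refine ⟨hspos, hxpos, hrpos, ?_⟩
      rw [hdynS, hdynX, hdynR]
      linear_combination (ih j).2.2.2
  have hxlt1 : ∀ k j, x j k < 1 := by
    intro k j; obtain ⟨h1, h2, h3, h4⟩ := hinv k j; linarith
  -- positivity is preserved
  have hpos_step : ∀ k (j : Fin n), 0 < x j k → 0 < x j (k + 1) := by
    intro k j hx
    rw [hdynX]
    have h1 : 0 < (1 - h * δ) * x j k := by nlinarith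
    have h2 : 0 ≤ h * s j k * β * ∑ l, a j l * x l k := by
      have hs := (hinv k j).1
      have hsum : 0 ≤ ∑ l, a j l * x l k :=
        Finset.sum_nonneg fun l _ => mul_nonneg (haNonneg j l) (hinv k l).2.1
      positivity
    linarith
  -- positivity propagates along edges
  have hedge_step : ∀ k (j m : Fin n), E j m → 0 < x j k → 0 < x m (k + 1) := by
    intro k j m he hx
    rw [hdynX]
    have h1 : 0 ≤ (1 - h * δ) * x m k := by
      have := (hinv k m).2.1; nlinarith
    have hsum : a m j * x j k ≤ ∑ l, a m l * x l k := by
      refine Finset.single_le_sum (f := fun l => a m l * x l k) ?_ (Finset.mem_univ j)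
      exact fun l _ => mul_nonneg (haNonneg m l) (hinv k l).2.1
    have h2 : 0 < h * s m k * β * ∑ l, a m l * x l k := by
      have hs := (hinv k m).1
      have hterm : 0 < a m j * x j k := mul_pos (haE m j he) hx
      have : 0 < ∑ l, a m l * x l k := lt_of_lt_of_le hterm hsum
      positivity
    linarith
  -- a walk from an infected node makes the endpoint infected
  have hwalk : ∀ t (j m : Fin n), HasWalk E t j m → 0 < x j 0 → 0 < x m t := by
    intro t
    induction t with
    | zero =>
      rintro j m ⟨p, h0, ht, _⟩ hx
      rw [← ht, h0]; exact hx
    | succ t ih =>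
      rintro j m ⟨p, h0, ht, hE⟩ hx
      have hw : HasWalk E t j (p t) := ⟨p, h0, rfl, fun l hl => hE l (Nat.lt_succ_of_lt hl)⟩
      have he : E (p t) m := ht ▸ hE t (Nat.lt_succ_self t)
      exact hedge_step t (p t) m he (ih j (p t) hw hx)
  -- if infected at time k, there is a walk of length ≤ k from an initially infected node
  have hfwd : ∀ k (m : Fin n), 0 < x m k →
      ∃ t ≤ k, ∃ j : Fin n, 0 < x j 0 ∧ HasWalk E t j m := by
    intro k
    induction k with
    | zero =>
      intro m hx
      exact ⟨0, le_refl 0, m, hx, ⟨fun _ => m, rfl, rfl, fun l hl => absurd hl (Nat.not_lt_zero l)⟩⟩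
    | succ k ih =>
      intro m hx1
      by_cases hxm : 0 < x m k
      · obtain ⟨t, htk, j, hj, hw⟩ := ih m hxm
        exact ⟨t, le_trans htk (Nat.le_succ k), j, hj, hw⟩
      · have hxm0 : x m k = 0 := le_antisymm (not_lt.mp hxm) (hinv k m).2.1
        have hsum : 0 < ∑ l, a m l * x l k := by
          rw [hdynX, hxm0] at hx1
          have hs := (hinv k m).1
          by_contra hcon
          push_neg at hcon
          have : h * s m k * β * ∑ l, a m l * x l k ≤ 0 :=
            mul_nonpos_of_nonneg_of_nonpos (by positivity) hcon
          linarith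
        have hl : ∃ l : Fin n, 0 < a m l * x l k := by
          by_contra hcon
          push_neg at hcon
          have : ∑ l, a m l * x l k ≤ 0 := Finset.sum_nonpos fun l _ => hcon l
          linarith
        obtain ⟨l, hl⟩ := hl
        have hxl : 0 < x l k := by
          rcases lt_or_ge 0 (x l k) with h' | h'
          · exact h'
          · exfalso; nlinarith [haNonneg m l]
        have hal : 0 < a m l := by
          rcases lt_or_ge 0 (a m l) with h' | h'
          · exact h'
          · exfalso; nlinarith [(hinv k l).2.1]
        have hElm : E l m := by
          by_contra hne
          rcases eq_or_ne l m with rfl | hlm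
          · rw [hxm0] at hxl; exact lt_irrefl 0 hxl
          · rw [haZero m l hne hlm] at hal; exact lt_irrefl 0 hal
        obtain ⟨t, htk, j, hj, hw⟩ := ih l hxl
        exact ⟨t + 1, Nat.succ_le_succ htk, j, hj, hw.extend hElm⟩
  -- identify the distance with a natural number
  set T : Set ℕ := {t | ∃ j : Fin n, 0 < x j 0 ∧ HasWalk E t j i} with hT
  have hTne : T.Nonempty := by
    by_contra hcon
    apply hdi
    unfold distToInfected
    rw [show {t : ℕ∞ | ∃ t' : ℕ, (t' : ℕ∞) = t ∧ ∃ j : Fin n, 0 < x j 0 ∧ HasWalk E t' j i}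
        = (∅ : Set ℕ∞) from ?_]
    · exact sInf_empty
    · ext t
      simp only [Set.mem_setOf_eq, Set.mem_empty_iff_false, iff_false]
      rintro ⟨t', -, j, hj, hw⟩
      exact hcon ⟨t', j, hj, hw⟩
  have hd : distToInfected E x i = ((sInf T : ℕ) : ℕ∞) := by
    unfold distToInfected
    apply le_antisymm
    · refine sInf_le ?_
      have hm : sInf T ∈ T := Nat.sInf_mem hTne
      obtain ⟨j, hj, hw⟩ := hm
      exact ⟨sInf T, rfl, j, hj, hw⟩
    · refine le_sInf ?_
      rintro t ⟨t', rfl, j, hj, hw⟩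
      have ht' : t' ∈ T := by exact ⟨j, hj, hw⟩
      exact_mod_cast Nat.sInf_le ht'
  rw [hd]
  constructor
  · intro k hk
    have hk' : k < sInf T := by exact_mod_cast hk
    by_contra hne
    have hxk : 0 < x i k := lt_of_le_of_ne (hinv k i).2.1 (Ne.symm hne)
    obtain ⟨t, htk, j, hj, hw⟩ := hfwd k i hxk
    have htT : t ∈ T := by exact ⟨j, hj, hw⟩
    have : sInf T ≤ t := Nat.sInf_le htT
    omega
  · intro k hk
    have hk' : sInf T ≤ k := by exact_mod_cast hk
    obtain ⟨j, hj, hw⟩ := Nat.sInf_mem hTne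
    have hbase : 0 < x i (sInf T) := hwalk (sInf T) j i hw hj
    have hmono : ∀ m, 0 < x i (sInf T + m) := by
      intro m
      induction m with
      | zero => simpa using hbase
      | succ m ih => exact hpos_step (sInf T + m) i ih
    have := hmono (k - sInf T)
    rw [Nat.add_sub_cancel' hk'] at this
    exact ⟨this, hxlt1 k i⟩
end

section
/- Consider the discrete-time networked SIR model under Assumptions 1 and 2. Let i ∈ V be a node with d_i ≠ +∞. Then r_i[k] = 0 for all time steps k ≤ d_i, and r_i[k] ∈ (0,1) for all time steps k > d_i. -/
/-- Extending a walk by one edge. -/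
lemma hasWalk_extend {n : ℕ} {E : Fin n → Fin n → Prop} {t : ℕ} {j0 j i : Fin n}
    (hw : HasWalk E t j0 j) (he : E j i) : HasWalk E (t + 1) j0 i := by
  obtain ⟨p, hp0, hpt, hpe⟩ := hw
  refine ⟨fun l => if l ≤ t then p l else i, by simpa using hp0, by simp, ?_⟩
  intro l hl
  rcases Nat.lt_or_ge l t with h' | h'
  · have h1 : l ≤ t := h'.le
    have h2 : l + 1 ≤ t := h'
    simp only [if_pos h1, if_pos h2]
    exact hpe l h'
  · have hlt : l = t := by omega
    subst hlt
    have h1 : l ≤ l := le_rfl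
    have h2 : ¬ (l + 1 ≤ l) := by omega
    simp only [if_pos h1, if_neg h2, hpt]
    exact he

/-- Lemma 1(c): Under Assumptions 1 and 2, if `d_i ≠ +∞`, then
`r_i[k] = 0` for all `k ≤ d_i` and `r_i[k] ∈ (0,1)` for all `k > d_i`. -/
theorem sir_recovered_zero_before_dist_pos_after
    {n : ℕ} (E : Fin n → Fin n → Prop) (a : Fin n → Fin n → ℝ)
    (h β δ : ℝ) (s x r : Fin n → ℕ → ℝ)
    -- SIR dynamics
    (hdynS : ∀ i k, s i (k + 1) = s i k - h * s i k * β * ∑ j, a i j * x j k)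
    (hdynX : ∀ i k, x i (k + 1) = (1 - h * δ) * x i k + h * s i k * β * ∑ j, a i j * x j k)
    (hdynR : ∀ i k, r i (k + 1) = r i k + h * δ * x i k)
    -- Assumption 1 (initial conditions)
    (hs0 : ∀ i, 0 < s i 0 ∧ s i 0 ≤ 1)
    (hx0 : ∀ i, 0 ≤ x i 0 ∧ x i 0 < 1)
    (hr0 : ∀ i, r i 0 = 0)
    (hsum0 : ∀ i, s i 0 + x i 0 = 1)
    -- Assumption 2 (model parameters)
    (hh : 0 < h) (hβ : 0 < β) (hδ : 0 < δ) (hhδ : h * δ < 1)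
    (haE : ∀ i j, E j i → 0 < a i j)
    (haNonneg : ∀ i j, 0 ≤ a i j)
    (haZero : ∀ i j, ¬ E j i → j ≠ i → a i j = 0)
    (hRow : ∀ i, h * β * ∑ j, a i j < 1)
    (i : Fin n) (hdi : distToInfected E x i ≠ ⊤) :
    (∀ k : ℕ, (k : ℕ∞) ≤ distToInfected E x i → r i k = 0) ∧
      (∀ k : ℕ, distToInfected E x i < (k : ℕ∞) → r i k ∈ Set.Ioo (0 : ℝ) 1) := by
  classical
  -- Basic invariant: positivity of s, nonnegativity of x and r, conservation of mass.
  have inv : ∀ k, ∀ i : Fin n,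
      0 < s i k ∧ 0 ≤ x i k ∧ 0 ≤ r i k ∧ s i k + x i k + r i k = 1 := by
    intro k
    induction k with
    | zero =>
      intro i
      refine ⟨(hs0 i).1, (hx0 i).1, le_of_eq (hr0 i).symm, ?_⟩
      rw [hr0 i]; linarith [hsum0 i]
    | succ k ih =>
      intro i
      have hxnn : ∀ j, 0 ≤ x j k := fun j => (ih j).2.1
      have hxle : ∀ j, x j k ≤ 1 := by
        intro j
        have h1 := (ih j).1
        have h2 := (ih j).2.2.1
        have h3 := (ih j).2.2.2
        linarith
      have hSnn : 0 ≤ ∑ j, a i j * x j k :=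
        Finset.sum_nonneg fun j _ => mul_nonneg (haNonneg i j) (hxnn j)
      have hSle : ∑ j, a i j * x j k ≤ ∑ j, a i j :=
        Finset.sum_le_sum fun j _ =>
          mul_le_of_le_one_right (haNonneg i j) (hxle j)
      have hlt : h * β * ∑ j, a i j * x j k < 1 := by
        calc h * β * ∑ j, a i j * x j k ≤ h * β * ∑ j, a i j := by
              apply mul_le_mul_of_nonneg_left hSle (by positivity)
          _ < 1 := hRow i
      have hs' : 0 < s i (k + 1) := by
        have : s i (k + 1) = s i k * (1 - h * β * ∑ j, a i j * x j k) := by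
          rw [hdynS]; ring
        rw [this]
        exact mul_pos (ih i).1 (by linarith)
      have hx' : 0 ≤ x i (k + 1) := by
        rw [hdynX]
        have h1 : 0 ≤ (1 - h * δ) * x i k :=
          mul_nonneg (by linarith) (hxnn i)
        have h2 : 0 ≤ h * s i k * β * ∑ j, a i j * x j k :=
          mul_nonneg (mul_nonneg (mul_nonneg hh.le (ih i).1.le) hβ.le) hSnn
        linarith
      have hr' : 0 ≤ r i (k + 1) := by
        rw [hdynR]
        have h2 : 0 ≤ h * δ * x i k :=
          mul_nonneg (mul_nonneg hh.le hδ.le) (hxnn i)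
        linarith [(ih i).2.2.1]
      have hsum' : s i (k + 1) + x i (k + 1) + r i (k + 1) = 1 := by
        have hc : s i (k + 1) + x i (k + 1) + r i (k + 1)
            = s i k + x i k + r i k := by
          rw [hdynS, hdynX, hdynR]; ring
        rw [hc]; exact (ih i).2.2.2
      exact ⟨hs', hx', hr', hsum'⟩
  -- Positivity of x persists.
  have xstep : ∀ (i : Fin n) k, 0 < x i k → 0 < x i (k + 1) := by
    intro i k hx
    rw [hdynX]
    have h1 : 0 < (1 - h * δ) * x i k := mul_pos (by linarith) hx
    have hSnn : 0 ≤ ∑ j, a i j * x j k :=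
      Finset.sum_nonneg fun j _ => mul_nonneg (haNonneg i j) ((inv k j).2.1)
    have h2 : 0 ≤ h * s i k * β * ∑ j, a i j * x j k :=
      mul_nonneg (mul_nonneg (mul_nonneg hh.le (inv k i).1.le) hβ.le) hSnn
    linarith
  -- Infection propagates along edges.
  have xedge : ∀ (i j : Fin n) k, E j i → 0 < x j k → 0 < x i (k + 1) := by
    intro i j k hE hxj
    rw [hdynX]
    have h1 : 0 ≤ (1 - h * δ) * x i k := mul_nonneg (by linarith) ((inv k i).2.1)
    have hterm : 0 < a i j * x j k := mul_pos (haE i j hE) hxj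
    have hSone : a i j * x j k ≤ ∑ j', a i j' * x j' k :=
      Finset.single_le_sum
        (f := fun j' => a i j' * x j' k)
        (fun j' _ => mul_nonneg (haNonneg i j') ((inv k j').2.1))
        (Finset.mem_univ j)
    have h2 : 0 < h * s i k * β * ∑ j', a i j' * x j' k :=
      mul_pos (mul_pos (mul_pos hh (inv k i).1) hβ) (lt_of_lt_of_le hterm hSone)
    linarith
  -- Along a walk from an initially infected node, x becomes positive.
  have xwalk : ∀ (t : ℕ) (j i : Fin n), 0 < x j 0 → HasWalk E t j i → 0 < x i t := by
    intro t
    induction t with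
    | zero =>
      intro j i hxj ⟨p, hp0, hpt, _⟩
      have : j = i := hp0 ▸ hpt
      exact this ▸ hxj
    | succ t iht =>
      intro j i hxj ⟨p, hp0, hpt, hpe⟩
      have hw : HasWalk E t j (p t) := ⟨p, hp0, rfl, fun l hl => hpe l (by omega)⟩
      have hx := iht j (p t) hxj hw
      have hE : E (p t) i := hpt ▸ hpe t (by omega)
      exact xedge i (p t) t hE hx
  -- If x i k is positive, there is a walk of length ≤ k from an infected node.
  have claim : ∀ (k : ℕ) (i : Fin n), 0 < x i k →
      ∃ t ≤ k, ∃ j : Fin n, 0 < x j 0 ∧ HasWalk E t j i := by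
    intro k
    induction k with
    | zero =>
      intro i hx
      exact ⟨0, le_rfl, i, hx, fun _ => i, rfl, rfl, fun l hl => by omega⟩
    | succ k ihk =>
      intro i hx
      rcases lt_or_ge 0 (x i k) with hxk | hxk
      · obtain ⟨t, ht, hrest⟩ := ihk i hxk
        exact ⟨t, by omega, hrest⟩
      · have hxk0 : x i k = 0 := le_antisymm hxk ((inv k i).2.1)
        have hSpos : 0 < ∑ j, a i j * x j k := by
          by_contra hc
          push_neg at hc
          have h2 : h * s i k * β * ∑ j, a i j * x j k ≤ 0 := by
            have : 0 ≤ h * s i k * β :=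
              mul_nonneg (mul_nonneg hh.le (inv k i).1.le) hβ.le
            exact mul_nonpos_of_nonneg_of_nonpos this hc
          rw [hdynX, hxk0] at hx
          simp at hx
          linarith
        obtain ⟨j, _, hj⟩ : ∃ j ∈ Finset.univ, 0 < a i j * x j k := by
          by_contra hc
          push_neg at hc
          have : ∑ j, a i j * x j k ≤ 0 :=
            Finset.sum_nonpos fun j hjm => hc j hjm
          linarith
        have haij : 0 < a i j := by
          rcases lt_or_ge 0 (a i j) with h' | h'
          · exact h'
          · have : a i j = 0 := le_antisymm h' (haNonneg i j)
            rw [this, zero_mul] at hj; linarith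
        have hxj : 0 < x j k := by
          rcases lt_or_ge 0 (x j k) with h' | h'
          · exact h'
          · nlinarith
        have hEji : E j i := by
          by_contra hE
          rcases eq_or_ne j i with hji | hji
          · rw [hji] at hxj; linarith
          · have := haZero i j hE hji; linarith
        obtain ⟨t, ht, j0, hj0, hw⟩ := ihk j hxj
        exact ⟨t + 1, by omega, j0, hj0, hasWalk_extend hw hEji⟩
  -- The distance set is nonempty and the distance equals a Nat.find.
  have hne : ∃ t : ℕ, ∃ j : Fin n, 0 < x j 0 ∧ HasWalk E t j i := by
    by_contra hc
    push_neg at hc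
    apply hdi
    unfold distToInfected
    have : {t : ℕ∞ | ∃ t' : ℕ, (t' : ℕ∞) = t ∧ ∃ j : Fin n, 0 < x j 0 ∧ HasWalk E t' j i}
        = ∅ := by
      ext t
      simp only [Set.mem_setOf_eq, Set.mem_empty_iff_false, iff_false]
      rintro ⟨t', _, j, hj, hw⟩
      exact (hc t' j hj) hw
    rw [this, sInf_empty]
  set t₀ := Nat.find hne with ht₀def
  have ht₀spec : ∃ j : Fin n, 0 < x j 0 ∧ HasWalk E t₀ j i := Nat.find_spec hne
  have hd : distToInfected E x i = (t₀ : ℕ∞) := by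
    apply le_antisymm
    · apply sInf_le
      exact ⟨t₀, rfl, ht₀spec⟩
    · apply le_sInf
      rintro t ⟨t', rfl, j, hj, hw⟩
      exact_mod_cast Nat.find_min' hne ⟨j, hj, hw⟩
  -- x i k = 0 for k < t₀.
  have xzero : ∀ k < t₀, x i k = 0 := by
    intro k hk
    by_contra hc
    have hx : 0 < x i k := lt_of_le_of_ne ((inv k i).2.1) (Ne.symm hc)
    obtain ⟨t, ht, j, hj, hw⟩ := claim k i hx
    have : t₀ ≤ t := Nat.find_min' hne ⟨j, hj, hw⟩
    omega
  -- r i k = 0 for k ≤ t₀.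
  have rzero : ∀ k ≤ t₀, r i k = 0 := by
    intro k
    induction k with
    | zero => intro _; exact hr0 i
    | succ k ihk =>
      intro hk
      rw [hdynR, ihk (by omega), xzero k (by omega)]
      ring
  -- x i t₀ > 0.
  have hxt₀ : 0 < x i t₀ := by
    obtain ⟨j, hj, hw⟩ := ht₀spec
    exact xwalk t₀ j i hj hw
  -- r i k > 0 for k > t₀.
  have rpos : ∀ k, t₀ < k → 0 < r i k := by
    intro k hk
    induction k with
    | zero => omega
    | succ k ihk =>
      rcases Nat.lt_or_ge t₀ k with h' | h'
      · have h1 := ihk h'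
        have h2 : 0 ≤ h * δ * x i k :=
          mul_nonneg (mul_nonneg hh.le hδ.le) ((inv k i).2.1)
        rw [hdynR]; linarith
      · have hkt : k = t₀ := by omega
        subst hkt
        rw [hdynR]
        have h2 : 0 < h * δ * x i t₀ := mul_pos (mul_pos hh hδ) hxt₀
        linarith [(inv t₀ i).2.2.1]
  constructor
  · intro k hk
    rw [hd] at hk
    exact rzero k (by exact_mod_cast hk)
  · intro k hk
    rw [hd] at hk
    have hk' : t₀ < k := by exact_mod_cast hk
    refine ⟨rpos k hk', ?_⟩
    have h1 := (inv k i).1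
    have h2 := (inv k i).2.1
    have h3 := (inv k i).2.2.2
    linarith
end

section
/- Consider the discrete-time networked SIR model under Assumptions 1 and 2. Let i ∈ V and k ∈ ℤ≥0 be such that x_i[k] = 0, and let N_i = {j : (j,i) ∈ E}. If there exists j ∈ N_i with x_j[k] > 0, then x_i[k+1] > 0. If x_j[k] = 0 for all j ∈ N_i, then x_i[k+1] = 0. -/
/-!
Discrete-time networked SIR model (Section 2 of the paper).

Nodes are `Fin n`.  `E j i` means there is a directed edge `(j,i)` from `j` to `i`
(self-loops allowed).  Since the weights satisfy `a i j = 0` whenever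
`j ∉ N̄_i = {j : E j i} ∪ {i}`, the sum `∑_{j ∈ N̄_i} a_{ij} x_j[k]` coincides with
`∑ j, a i j * x j k`.
-/

/-- Fact 2: Under Assumptions 1 and 2, suppose `x_i[k] = 0`.  If some
in-neighbor `j ∈ N_i = {j : (j,i) ∈ E}` has `x_j[k] > 0` then `x_i[k+1] > 0`; if
`x_j[k] = 0` for all `j ∈ N_i` then `x_i[k+1] = 0`. -/
theorem sir_zero_infection_next_step
    {n : ℕ} (E : Fin n → Fin n → Prop) (a : Fin n → Fin n → ℝ)
    (h β δ : ℝ) (s x r : Fin n → ℕ → ℝ)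
    -- SIR dynamics
    (hdynS : ∀ i k, s i (k + 1) = s i k - h * s i k * β * ∑ j, a i j * x j k)
    (hdynX : ∀ i k, x i (k + 1) = (1 - h * δ) * x i k + h * s i k * β * ∑ j, a i j * x j k)
    (hdynR : ∀ i k, r i (k + 1) = r i k + h * δ * x i k)
    -- Assumption 1 (initial conditions)
    (hs0 : ∀ i, 0 < s i 0 ∧ s i 0 ≤ 1)
    (hx0 : ∀ i, 0 ≤ x i 0 ∧ x i 0 < 1)
    (hr0 : ∀ i, r i 0 = 0)
    (hsum0 : ∀ i, s i 0 + x i 0 = 1)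
    -- Assumption 2 (model parameters)
    (hh : 0 < h) (hβ : 0 < β) (hδ : 0 < δ) (hhδ : h * δ < 1)
    (haE : ∀ i j, E j i → 0 < a i j)
    (haNonneg : ∀ i j, 0 ≤ a i j)
    (haZero : ∀ i j, ¬ E j i → j ≠ i → a i j = 0)
    (hRow : ∀ i, h * β * ∑ j, a i j < 1) :
    ∀ (i : Fin n) (k : ℕ), x i k = 0 →
      ((∃ j, E j i ∧ 0 < x j k) → 0 < x i (k + 1)) ∧
        ((∀ j, E j i → x j k = 0) → x i (k + 1) = 0) := by
  have inv : ∀ k i, 0 < s i k ∧ 0 ≤ x i k ∧ s i k + x i k ≤ 1 := by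
    intro k
    induction k with
    | zero => exact fun i => ⟨(hs0 i).1, (hx0 i).1, le_of_eq (hsum0 i)⟩
    | succ k ih =>
      intro i
      obtain ⟨hsk, hxk, hsx⟩ := ih i
      have hSnn : 0 ≤ ∑ j, a i j * x j k :=
        Finset.sum_nonneg fun j _ => mul_nonneg (haNonneg i j) (ih j).2.1
      have hSle : ∑ j, a i j * x j k ≤ ∑ j, a i j := by
        apply Finset.sum_le_sum
        intro j _
        have h1 : x j k ≤ 1 := by have := (ih j); linarith [this.1, this.2.2]
        nlinarith [haNonneg i j]
      have hfac : h * β * ∑ j, a i j * x j k < 1 := by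
        have := hRow i
        nlinarith [mul_pos hh hβ]
      constructor
      · rw [hdynS]
        nlinarith [mul_nonneg (mul_nonneg hh.le hβ.le) hSnn]
      constructor
      · rw [hdynX]
        have : 0 ≤ h * s i k * β * ∑ j, a i j * x j k := by positivity
        nlinarith
      · rw [hdynS, hdynX]
        nlinarith [mul_nonneg (mul_nonneg hh.le hδ.le) hxk]
  intro i k hxi
  constructor
  · rintro ⟨j, hEj, hxj⟩
    rw [hdynX, hxi]
    have hs : 0 < s i k := (inv k i).1
    have hS : 0 < ∑ j', a i j' * x j' k := by
      apply Finset.sum_pos' (fun j' _ => mul_nonneg (haNonneg i j') (inv k j').2.1)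
      exact ⟨j, Finset.mem_univ j, mul_pos (haE i j hEj) hxj⟩
    nlinarith [mul_pos (mul_pos (mul_pos hh hs) hβ) hS]
  · intro hall
    rw [hdynX, hxi]
    have hS : ∑ j, a i j * x j k = 0 := by
      apply Finset.sum_eq_zero
      intro j _
      by_cases hE : E j i
      · rw [hall j hE, mul_zero]
      · by_cases hji : j = i
        · rw [hji, hxi, mul_zero]
        · rw [haZero i j hE hji, zero_mul]
    rw [hS]
    ring
end

section
/- Consider the discrete-time networked SIR model under Assumptions 1 and 2. For any node i ∈ V and any time step k ∈ ℤ≥0: if x_i[k] > 0, then r_i[k+1] > 0; and if x_i[k] = 0, then r_i[k+1] = 0. -/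
/-!
Discrete-time networked SIR model (Section 2 of the paper).

Nodes are `Fin n`.  `E j i` means there is a directed edge `(j,i)` from `j` to `i`
(self-loops allowed).  Since the weights satisfy `a i j = 0` whenever
`j ∉ N̄_i = {j : E j i} ∪ {i}`, the sum `∑_{j ∈ N̄_i} a_{ij} x_j[k]` coincides with
`∑ j, a i j * x j k`.
-/

/-- Fact 3: Under Assumptions 1 and 2, for any node `i` and time `k`:
if `x_i[k] > 0` then `r_i[k+1] > 0`, and if `x_i[k] = 0` then `r_i[k+1] = 0`. -/
theorem sir_recovered_next_step_iff_infected
    {n : ℕ} (E : Fin n → Fin n → Prop) (a : Fin n → Fin n → ℝ)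
    (h β δ : ℝ) (s x r : Fin n → ℕ → ℝ)
    -- SIR dynamics
    (hdynS : ∀ i k, s i (k + 1) = s i k - h * s i k * β * ∑ j, a i j * x j k)
    (hdynX : ∀ i k, x i (k + 1) = (1 - h * δ) * x i k + h * s i k * β * ∑ j, a i j * x j k)
    (hdynR : ∀ i k, r i (k + 1) = r i k + h * δ * x i k)
    -- Assumption 1 (initial conditions)
    (hs0 : ∀ i, 0 < s i 0 ∧ s i 0 ≤ 1)
    (hx0 : ∀ i, 0 ≤ x i 0 ∧ x i 0 < 1)
    (hr0 : ∀ i, r i 0 = 0)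
    (hsum0 : ∀ i, s i 0 + x i 0 = 1)
    -- Assumption 2 (model parameters)
    (hh : 0 < h) (hβ : 0 < β) (hδ : 0 < δ) (hhδ : h * δ < 1)
    (haE : ∀ i j, E j i → 0 < a i j)
    (haNonneg : ∀ i j, 0 ≤ a i j)
    (haZero : ∀ i j, ¬ E j i → j ≠ i → a i j = 0)
    (hRow : ∀ i, h * β * ∑ j, a i j < 1) :
    ∀ (i : Fin n) (k : ℕ),
      (0 < x i k → 0 < r i (k + 1)) ∧ (x i k = 0 → r i (k + 1) = 0) := by
  -- invariant: 0 ≤ s, 0 ≤ x, s + x ≤ 1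
  have inv : ∀ k, ∀ i : Fin n, 0 ≤ s i k ∧ 0 ≤ x i k ∧ s i k + x i k ≤ 1 := by
    intro k
    induction k with
    | zero =>
      intro i
      exact ⟨(hs0 i).1.le, (hx0 i).1, (hsum0 i).le⟩
    | succ k ih =>
      intro i
      have hsk := (ih i).1
      have hxk := (ih i).2.1
      have hsumk := (ih i).2.2
      have hsumnn : 0 ≤ ∑ j, a i j * x j k :=
        Finset.sum_nonneg fun j _ => mul_nonneg (haNonneg i j) (ih j).2.1
      have hsumle : ∑ j, a i j * x j k ≤ ∑ j, a i j := by
        apply Finset.sum_le_sum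
        intro j _
        have hxj1 : x j k ≤ 1 := by nlinarith [(ih j).1, (ih j).2.2]
        nlinarith [haNonneg i j]
      have hterm : 0 ≤ h * s i k * β * ∑ j, a i j * x j k := by positivity
      have hs' : 0 ≤ s i (k + 1) := by
        rw [hdynS]
        have : h * β * ∑ j, a i j * x j k ≤ h * β * ∑ j, a i j := by
          have := mul_le_mul_of_nonneg_left hsumle (mul_nonneg hh.le hβ.le)
          nlinarith
        have h1 : h * β * ∑ j, a i j * x j k < 1 := lt_of_le_of_lt this (hRow i)
        nlinarith
      have hx' : 0 ≤ x i (k + 1) := by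
        rw [hdynX]
        nlinarith
      refine ⟨hs', hx', ?_⟩
      rw [hdynS, hdynX]
      nlinarith [mul_nonneg (mul_nonneg hh.le hδ.le) hxk]
  -- r is nonnegative
  have rnn : ∀ k, ∀ i : Fin n, 0 ≤ r i k := by
    intro k
    induction k with
    | zero => intro i; exact (hr0 i).ge
    | succ k ih =>
      intro i
      rw [hdynR]
      have := (inv k i).2.1
      nlinarith [ih i, mul_nonneg (mul_nonneg hh.le hδ.le) this]
  intro i k
  constructor
  · intro hx
    rw [hdynR]
    nlinarith [rnn k i, mul_pos (mul_pos hh hδ) hx]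
  · -- x i k = 0 → r i (k+1) = 0, by induction on k
    induction k with
    | zero =>
      intro hx
      rw [hdynR, hr0, hx]; ring
    | succ k ih =>
      intro hx
      have hxk : x i k = 0 := by
        have hd := hdynX i k
        rw [hx] at hd
        have h1 : 0 ≤ (1 - h * δ) * x i k :=
          mul_nonneg (by nlinarith) (inv k i).2.1
        have hsumnn : 0 ≤ ∑ j, a i j * x j k :=
          Finset.sum_nonneg fun j _ => mul_nonneg (haNonneg i j) (inv k j).2.1
        have h2 : 0 ≤ h * s i k * β * ∑ j, a i j * x j k := by
          have := (inv k i).1; positivity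
        have : (1 - h * δ) * x i k = 0 := by nlinarith
        have hpos : (0:ℝ) < 1 - h * δ := by nlinarith
        rcases mul_eq_zero.mp this with h' | h'
        · exact absurd h' (ne_of_gt hpos)
        · exact h'
      have hrk : r i (k + 1) = 0 := ih hxk
      rw [hdynR, hrk, hx]; ring
end

section
/- Consider the discrete-time networked SIR model under Assumptions 1 and 2. Let S_I' = {i ∈ S_I : a_{ii} > 0}. Then for any node i₁ ∈ S_I' and any node i₂ ∈ V with d_{i₂} ≠ +∞, and for all time steps k₁ ≥ 0 and k₂ ≥ d_{i₂}, the 2×2 matrix whose first row is Φ^x_{k₁,i₁} = [ s_{i₁}[k₁] ∑_{j∈N̄_{i₁}} a_{i₁ j} x_j[k₁], −x_{i₁}[k₁] ] and whose second row is Φ^r_{k₂,i₂} = [ 0, x_{i₂}[k₂] ] has rank 2. -/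
/-- Lemma 2(a): Under Assumptions 1 and 2, for any `i₁ ∈ S_I' =
{i ∈ S_I : a_{ii} > 0}` and any `i₂ ∈ V` with `d_{i₂} ≠ +∞`, and for all `k₁ ≥ 0`
and `k₂ ≥ d_{i₂}`, the `2 × 2` matrix with rows
`Φ^x_{k₁,i₁} = [s_{i₁}[k₁] ∑_{j∈N̄_{i₁}} a_{i₁j} x_j[k₁], −x_{i₁}[k₁]]` and
`Φ^r_{k₂,i₂} = [0, x_{i₂}[k₂]]` has rank `2`. -/
theorem sir_coefficient_matrix_rank_two_of_infected_selfloop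
    {n : ℕ} (E : Fin n → Fin n → Prop) (a : Fin n → Fin n → ℝ)
    (h β δ : ℝ) (s x r : Fin n → ℕ → ℝ)
    -- SIR dynamics
    (hdynS : ∀ i k, s i (k + 1) = s i k - h * s i k * β * ∑ j, a i j * x j k)
    (hdynX : ∀ i k, x i (k + 1) = (1 - h * δ) * x i k + h * s i k * β * ∑ j, a i j * x j k)
    (hdynR : ∀ i k, r i (k + 1) = r i k + h * δ * x i k)
    -- Assumption 1 (initial conditions)
    (hs0 : ∀ i, 0 < s i 0 ∧ s i 0 ≤ 1)
    (hx0 : ∀ i, 0 ≤ x i 0 ∧ x i 0 < 1)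
    (hr0 : ∀ i, r i 0 = 0)
    (hsum0 : ∀ i, s i 0 + x i 0 = 1)
    -- Assumption 2 (model parameters)
    (hh : 0 < h) (hβ : 0 < β) (hδ : 0 < δ) (hhδ : h * δ < 1)
    (haE : ∀ i j, E j i → 0 < a i j)
    (haNonneg : ∀ i j, 0 ≤ a i j)
    (haZero : ∀ i j, ¬ E j i → j ≠ i → a i j = 0)
    (hRow : ∀ i, h * β * ∑ j, a i j < 1)
    (i₁ i₂ : Fin n) (hi₁ : 0 < x i₁ 0) (hii : 0 < a i₁ i₁)
    (hdi₂ : distToInfected E x i₂ ≠ ⊤)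
    (k₁ k₂ : ℕ) (hk₂ : distToInfected E x i₂ ≤ (k₂ : ℕ∞)) :
    (!![s i₁ k₁ * ∑ j, a i₁ j * x j k₁, -(x i₁ k₁); 0, x i₂ k₂] :
      Matrix (Fin 2) (Fin 2) ℝ).rank = 2 := by

  -- basic invariants
  have key : ∀ k, ∀ i : Fin n, 0 < s i k ∧ 0 ≤ x i k ∧ s i k + x i k ≤ 1 := by
    intro k
    induction k with
    | zero =>
      intro i
      exact ⟨(hs0 i).1, (hx0 i).1, le_of_eq (hsum0 i)⟩
    | succ k ih =>
      intro i
      have hxle : ∀ j : Fin n, x j k ≤ 1 := by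
        intro j
        have := (ih j).2.2
        have := (ih j).1
        linarith
      have hSnn : 0 ≤ ∑ j, a i j * x j k :=
        Finset.sum_nonneg fun j _ => mul_nonneg (haNonneg i j) (ih j).2.1
      have hSle : ∑ j, a i j * x j k ≤ ∑ j, a i j := by
        apply Finset.sum_le_sum
        intro j _
        calc a i j * x j k ≤ a i j * 1 := by
              exact mul_le_mul_of_nonneg_left (hxle j) (haNonneg i j)
          _ = a i j := mul_one _
      have hlt : h * β * ∑ j, a i j * x j k < 1 := by
        calc h * β * ∑ j, a i j * x j k ≤ h * β * ∑ j, a i j := by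
              exact mul_le_mul_of_nonneg_left hSle (le_of_lt (mul_pos hh hβ))
          _ < 1 := hRow i
      have hspos : 0 < s i (k + 1) := by
        rw [hdynS]
        have : s i k - h * s i k * β * ∑ j, a i j * x j k
            = s i k * (1 - h * β * ∑ j, a i j * x j k) := by ring
        rw [this]
        exact mul_pos (ih i).1 (by linarith)
      refine ⟨hspos, ?_, ?_⟩
      · rw [hdynX]
        have h1 : 0 ≤ (1 - h * δ) * x i k :=
          mul_nonneg (by linarith) (ih i).2.1
        have h2 : 0 ≤ h * s i k * β * ∑ j, a i j * x j k :=
          mul_nonneg (mul_nonneg (mul_nonneg hh.le (ih i).1.le) hβ.le) hSnn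
        linarith
      · rw [hdynS, hdynX]
        have hxnn := (ih i).2.1
        have hsum := (ih i).2.2
        have hδx : 0 ≤ h * δ * x i k := mul_nonneg (mul_pos hh hδ).le hxnn
        nlinarith
  -- positivity of x persists
  have xstep : ∀ (i : Fin n) (k : ℕ), 0 < x i k → 0 < x i (k + 1) := by
    intro i k hx
    rw [hdynX]
    have hSnn : 0 ≤ ∑ j, a i j * x j k :=
      Finset.sum_nonneg fun j _ => mul_nonneg (haNonneg i j) (key k j).2.1
    have h1 : 0 < (1 - h * δ) * x i k := mul_pos (by linarith) hx
    have h2 : 0 ≤ h * s i k * β * ∑ j, a i j * x j k :=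
      mul_nonneg (mul_nonneg (mul_nonneg hh.le (key k i).1.le) hβ.le) hSnn
    linarith
  have xall : ∀ (i : Fin n), 0 < x i 0 → ∀ k, 0 < x i k := by
    intro i h0 k
    induction k with
    | zero => exact h0
    | succ k ih => exact xstep i k ih
  -- walk propagation
  have walkprop : ∀ (t : ℕ) (j i : Fin n), HasWalk E t j i → 0 < x j 0 →
      ∀ k, t ≤ k → 0 < x i k := by
    intro t
    induction t with
    | zero =>
      rintro j i ⟨p, hp0, hpt, -⟩ hj k -
      rw [← hpt, hp0]
      exact xall j hj k
    | succ t ih =>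
      rintro j i ⟨p, hp0, hpt, hedge⟩ hj k hk
      have hw : HasWalk E t j (p t) :=
        ⟨p, hp0, rfl, fun l hl => hedge l (Nat.lt_succ_of_lt hl)⟩
      have hpt_pos : ∀ m, t ≤ m → 0 < x (p t) m := ih j (p t) hw hj
      have hE : E (p t) i := by
        have := hedge t (Nat.lt_succ_self t)
        rwa [hpt] at this
      obtain ⟨m, rfl⟩ : ∃ m, k = m + 1 := ⟨k - 1, by omega⟩
      have hm : t ≤ m := by omega
      rw [hdynX]
      have hSg : a i (p t) * x (p t) m ≤ ∑ l, a i l * x l m := by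
        apply Finset.single_le_sum (f := fun l => a i l * x l m)
          (fun l _ => mul_nonneg (haNonneg i l) (key m l).2.1) (Finset.mem_univ _)
      have hterm : 0 < a i (p t) * x (p t) m :=
        mul_pos (haE i (p t) hE) (hpt_pos m hm)
      have h2 : 0 < h * s i m * β * ∑ l, a i l * x l m := by
        have : 0 < ∑ l, a i l * x l m := lt_of_lt_of_le hterm hSg
        exact mul_pos (mul_pos (mul_pos hh (key m i).1) hβ) this
      have h1 : 0 ≤ (1 - h * δ) * x i m :=
        mul_nonneg (by linarith) (key m i).2.1
      linarith
  -- x i₂ k₂ > 0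
  have hxi2 : 0 < x i₂ k₂ := by
    have hlt : distToInfected E x i₂ < ((k₂ : ℕ) + 1 : ℕ∞) := by
      calc distToInfected E x i₂ ≤ (k₂ : ℕ∞) := hk₂
        _ < ((k₂ : ℕ) + 1 : ℕ∞) := by
            exact_mod_cast Nat.lt_succ_self k₂
    rw [distToInfected, sInf_lt_iff] at hlt
    obtain ⟨t, ⟨t', ht', j, hj, hw⟩, hlt⟩ := hlt
    rw [← ht'] at hlt
    have ht'le : t' ≤ k₂ := by
      have h1 : ((t' : ℕ) : ℕ∞) < (((k₂ + 1 : ℕ)) : ℕ∞) := by exact_mod_cast hlt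
      have h2 : t' < k₂ + 1 := by exact_mod_cast h1
      omega
    exact walkprop t' j i₂ hw hj k₂ ht'le
  -- x i₁ k₁ > 0, s i₁ k₁ > 0, sum > 0
  have hxi1 : 0 < x i₁ k₁ := xall i₁ hi₁ k₁
  have hsi1 : 0 < s i₁ k₁ := (key k₁ i₁).1
  have hS1 : 0 < ∑ j, a i₁ j * x j k₁ := by
    have hle : a i₁ i₁ * x i₁ k₁ ≤ ∑ j, a i₁ j * x j k₁ :=
      Finset.single_le_sum (f := fun j => a i₁ j * x j k₁)
        (fun j _ => mul_nonneg (haNonneg i₁ j) (key k₁ j).2.1) (Finset.mem_univ _)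
    exact lt_of_lt_of_le (mul_pos hii hxi1) hle
  -- determinant nonzero ⇒ rank 2
  set M : Matrix (Fin 2) (Fin 2) ℝ :=
    !![s i₁ k₁ * ∑ j, a i₁ j * x j k₁, -(x i₁ k₁); 0, x i₂ k₂]
  have hdet : M.det ≠ 0 := by
    rw [Matrix.det_fin_two_of]
    have : 0 < s i₁ k₁ * (∑ j, a i₁ j * x j k₁) * x i₂ k₂ :=
      mul_pos (mul_pos hsi1 hS1) hxi2
    nlinarith
  have := Matrix.rank_of_isUnit M ((Matrix.isUnit_iff_isUnit_det M).mpr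
    (isUnit_iff_ne_zero.mpr hdet))
  simpa using this
end

section
/- Consider the discrete-time networked SIR model under Assumptions 1 and 2. Let S_I' = {i ∈ S_I : a_{ii} > 0}, N_i = {j : (j,i) ∈ E}, and S' = {i ∈ V \ S_I' : N_i ≠ ∅ and min{d_j : j ∈ N_i} ≠ +∞}. Then for any node i₁ ∈ S' and any node i₂ ∈ V with d_{i₂} ≠ +∞, and for all time steps k₁ ≥ min{d_j : j ∈ N_{i₁}} and k₂ ≥ d_{i₂}, the 2×2 matrix whose first row is Φ^x_{k₁,i₁} = [ s_{i₁}[k₁] ∑_{j∈N̄_{i₁}} a_{i₁ j} x_j[k₁], −x_{i₁}[k₁] ] and whose second row is Φ^r_{k₂,i₂} = [ 0, x_{i₂}[k₂] ] has rank 2. -/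
/-- Lemma 2(b): Under Assumptions 1 and 2, let
`S' = {i ∈ V \ S_I' : N_i ≠ ∅, min{d_j : j ∈ N_i} ≠ +∞}` where
`S_I' = {i ∈ S_I : a_{ii} > 0}` and `N_i = {j : (j,i) ∈ E}`.  For any `i₁ ∈ S'` and any
`i₂ ∈ V` with `d_{i₂} ≠ +∞`, and for all `k₁ ≥ min{d_j : j ∈ N_{i₁}}` and `k₂ ≥ d_{i₂}`,
the `2 × 2` matrix with rows
`Φ^x_{k₁,i₁} = [s_{i₁}[k₁] ∑_{j∈N̄_{i₁}} a_{i₁j} x_j[k₁], −x_{i₁}[k₁]]` and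
`Φ^r_{k₂,i₂} = [0, x_{i₂}[k₂]]` has rank `2`. -/
theorem sir_coefficient_matrix_rank_two_of_reachable_neighbor
    {n : ℕ} (E : Fin n → Fin n → Prop) (a : Fin n → Fin n → ℝ)
    (h β δ : ℝ) (s x r : Fin n → ℕ → ℝ)
    -- SIR dynamics
    (hdynS : ∀ i k, s i (k + 1) = s i k - h * s i k * β * ∑ j, a i j * x j k)
    (hdynX : ∀ i k, x i (k + 1) = (1 - h * δ) * x i k + h * s i k * β * ∑ j, a i j * x j k)
    (hdynR : ∀ i k, r i (k + 1) = r i k + h * δ * x i k)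
    -- Assumption 1 (initial conditions)
    (hs0 : ∀ i, 0 < s i 0 ∧ s i 0 ≤ 1)
    (hx0 : ∀ i, 0 ≤ x i 0 ∧ x i 0 < 1)
    (hr0 : ∀ i, r i 0 = 0)
    (hsum0 : ∀ i, s i 0 + x i 0 = 1)
    -- Assumption 2 (model parameters)
    (hh : 0 < h) (hβ : 0 < β) (hδ : 0 < δ) (hhδ : h * δ < 1)
    (haE : ∀ i j, E j i → 0 < a i j)
    (haNonneg : ∀ i j, 0 ≤ a i j)
    (haZero : ∀ i j, ¬ E j i → j ≠ i → a i j = 0)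
    (hRow : ∀ i, h * β * ∑ j, a i j < 1)
    (i₁ i₂ : Fin n)
    (hi₁notSI' : ¬ (0 < x i₁ 0 ∧ 0 < a i₁ i₁))
    (hN : ∃ j, E j i₁)
    (hminN : sInf {t : ℕ∞ | ∃ j, E j i₁ ∧ distToInfected E x j = t} ≠ ⊤)
    (hdi₂ : distToInfected E x i₂ ≠ ⊤)
    (k₁ k₂ : ℕ)
    (hk₁ : sInf {t : ℕ∞ | ∃ j, E j i₁ ∧ distToInfected E x j = t} ≤ (k₁ : ℕ∞))
    (hk₂ : distToInfected E x i₂ ≤ (k₂ : ℕ∞)) :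
    (!![s i₁ k₁ * ∑ j, a i₁ j * x j k₁, -(x i₁ k₁); 0, x i₂ k₂] :
      Matrix (Fin 2) (Fin 2) ℝ).rank = 2 := by
  -- Basic invariant: s stays positive, x stays nonnegative, s + x ≤ 1.
  have inv : ∀ k, ∀ i, 0 < s i k ∧ 0 ≤ x i k ∧ s i k + x i k ≤ 1 := by
    intro k
    induction k with
    | zero => exact fun i => ⟨(hs0 i).1, (hx0 i).1, le_of_eq (hsum0 i)⟩
    | succ k ih =>
      intro i
      have hSnn : 0 ≤ ∑ j, a i j * x j k :=
        Finset.sum_nonneg fun j _ => mul_nonneg (haNonneg i j) (ih j).2.1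
      have hxle : ∀ j, x j k ≤ 1 := fun j =>
        le_trans (le_add_of_nonneg_left (ih j).1.le) (ih j).2.2
      have hSle : ∑ j, a i j * x j k ≤ ∑ j, a i j :=
        Finset.sum_le_sum fun j _ => mul_le_of_le_one_right (haNonneg i j) (hxle j)
      have h1 : h * β * ∑ j, a i j * x j k < 1 :=
        lt_of_le_of_lt (mul_le_mul_of_nonneg_left hSle (by positivity)) (hRow i)
      have hspos : 0 < s i (k + 1) := by
        have : s i (k + 1) = s i k * (1 - h * β * ∑ j, a i j * x j k) := by
          rw [hdynS]; ring
        rw [this]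
        exact mul_pos (ih i).1 (by linarith)
      have hxnn : 0 ≤ x i (k + 1) := by
        rw [hdynX]
        have h2 : 0 ≤ h * s i k * β * ∑ j, a i j * x j k := by
          have := (ih i).1.le; positivity
        nlinarith [(ih i).2.1]
      refine ⟨hspos, hxnn, ?_⟩
      have : s i (k + 1) + x i (k + 1) = s i k + x i k - h * δ * x i k := by
        rw [hdynS, hdynX]; ring
      rw [this]
      have := (ih i).2.2
      have hx := (ih i).2.1
      have h2 : 0 ≤ h * δ * x i k := mul_nonneg (mul_nonneg hh.le hδ.le) hx
      linarith
  -- positivity of x propagates in time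
  have xstep : ∀ i k, 0 < x i k → 0 < x i (k + 1) := by
    intro i k hx
    rw [hdynX]
    have hSnn : 0 ≤ ∑ j, a i j * x j k :=
      Finset.sum_nonneg fun j _ => mul_nonneg (haNonneg i j) (inv k j).2.1
    have hs := (inv k i).1
    have t1 : 0 < (1 - h * δ) * x i k := mul_pos (by linarith) hx
    have t2 : 0 ≤ h * s i k * β * ∑ j, a i j * x j k :=
      mul_nonneg (mul_nonneg (mul_nonneg hh.le hs.le) hβ.le) hSnn
    linarith
  -- positivity of x propagates along edges
  have xedge : ∀ i j k, E j i → 0 < x j k → 0 < x i (k + 1) := by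
    intro i j k hE hx
    rw [hdynX]
    have hS : 0 < ∑ l, a i l * x l k := by
      refine lt_of_lt_of_le (mul_pos (haE i j hE) hx) ?_
      exact Finset.single_le_sum (f := fun l => a i l * x l k)
        (fun l _ => mul_nonneg (haNonneg i l) (inv k l).2.1) (Finset.mem_univ j)
    have hs := (inv k i).1
    have hx' := (inv k i).2.1
    have t1 : 0 ≤ (1 - h * δ) * x i k := mul_nonneg (by linarith) hx'
    have t2 : 0 < h * s i k * β * ∑ j, a i j * x j k :=
      mul_pos (mul_pos (mul_pos hh hs) hβ) hS
    linarith
  -- positivity along walks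
  have xwalk : ∀ t (j i : Fin n), 0 < x j 0 → HasWalk E t j i → 0 < x i t := by
    intro t j i hj ⟨p, hp0, hpt, hedge⟩
    have key : ∀ l, l ≤ t → 0 < x (p l) l := by
      intro l
      induction l with
      | zero => intro _; rw [hp0]; exact hj
      | succ l ih =>
        intro hl
        exact xedge _ _ _ (hedge l (by omega)) (ih (by omega))
    have := key t le_rfl
    rwa [hpt] at this
  have xlater : ∀ (i : Fin n) t k, t ≤ k → 0 < x i t → 0 < x i k := by
    intro i t k hle hx
    induction k with
    | zero =>
      have ht : t = 0 := by omega
      rwa [ht] at hx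
    | succ k ih =>
      rcases Nat.lt_or_ge t (k + 1) with hlt | hge
      · exact xstep i k (ih (by omega))
      · have : t = k + 1 := by omega
        rwa [← this]
  -- distance bound gives positivity
  have xofdist : ∀ (i : Fin n) (k : ℕ), distToInfected E x i < ((k : ℕ∞) + 1) → 0 < x i k := by
    intro i k hlt
    rw [distToInfected] at hlt
    obtain ⟨d, ⟨t', ht', j, hj, hwalk⟩, hdlt⟩ := sInf_lt_iff.mp hlt
    rw [← ht'] at hdlt
    have ht'le : t' ≤ k := by
      have : (t' : ℕ∞) < ((k + 1 : ℕ) : ℕ∞) := by push_cast; exact hdlt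
      exact_mod_cast Nat.lt_succ_iff.mp (by exact_mod_cast this)
    exact xlater i t' k ht'le (xwalk t' j i hj hwalk)
  -- find a neighbor j of i₁ with finite distance ≤ k₁
  have hltN : sInf {t : ℕ∞ | ∃ j, E j i₁ ∧ distToInfected E x j = t} < (k₁ : ℕ∞) + 1 :=
    lt_of_le_of_lt hk₁ (by exact_mod_cast Nat.lt_succ_self k₁)
  obtain ⟨d, ⟨j, hEj, hdj⟩, hdlt⟩ := sInf_lt_iff.mp hltN
  have hxj : 0 < x j k₁ := xofdist j k₁ (by rw [hdj]; exact hdlt)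
  have hSpos : 0 < ∑ l, a i₁ l * x l k₁ := by
    refine lt_of_lt_of_le (mul_pos (haE i₁ j hEj) hxj) ?_
    exact Finset.single_le_sum (f := fun l => a i₁ l * x l k₁)
      (fun l _ => mul_nonneg (haNonneg i₁ l) (inv k₁ l).2.1) (Finset.mem_univ j)
  have hA : 0 < s i₁ k₁ * ∑ l, a i₁ l * x l k₁ := mul_pos (inv k₁ i₁).1 hSpos
  have hC : 0 < x i₂ k₂ :=
    xofdist i₂ k₂ (lt_of_le_of_lt hk₂ (by exact_mod_cast Nat.lt_succ_self k₂))
  -- the matrix is triangular with positive diagonal, hence invertible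
  have hdet : (!![s i₁ k₁ * ∑ j, a i₁ j * x j k₁, -(x i₁ k₁); 0, x i₂ k₂] :
      Matrix (Fin 2) (Fin 2) ℝ).det ≠ 0 := by
    rw [Matrix.det_fin_two_of]
    have := mul_pos hA hC
    nlinarith
  have hunit : IsUnit (!![s i₁ k₁ * ∑ j, a i₁ j * x j k₁, -(x i₁ k₁); 0, x i₂ k₂] :
      Matrix (Fin 2) (Fin 2) ℝ) :=
    (Matrix.isUnit_iff_isUnit_det _).mpr (isUnit_iff_ne_zero.mpr hdet)
  simpa using Matrix.rank_of_isUnit _ hunit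
end

section
/- Let M̄ be a finite set, let F_p be a 2×2 real symmetric positive definite matrix, and for each y ∈ M̄ let H_y be a 2×2 real symmetric positive semidefinite matrix; for Y ⊆ M̄ write H(Y) = ∑_{y∈Y} H_y and f_Pd(Y) = ln det(F_p + H(Y)) − ln det(F_p). Then f_Pd(∅) = 0, f_Pd is monotone nondecreasing (f_Pd(A) ≤ f_Pd(B) for all A ⊆ B ⊆ M̄), and f_Pd is submodular: for all A ⊆ B ⊆ M̄ and all y ∈ M̄ \ B, f_Pd({y} ∪ A) − f_Pd(A) ≥ f_Pd({y} ∪ B) − f_Pd(B). -/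
open Matrix

/-- The objective `f_Pd(Y) = ln det(F_p + ∑_{y∈Y} H_y) − ln det(F_p)` of Eq. (29). -/
noncomputable def fPd {ι : Type*} [DecidableEq ι] (Fp : Matrix (Fin 2) (Fin 2) ℝ)
    (H : ι → Matrix (Fin 2) (Fin 2) ℝ) (Y : Finset ι) : ℝ :=
  Real.log (Fp + ∑ y ∈ Y, H y).det - Real.log Fp.det

private lemma sq_le_imp {x y : ℝ} (hx : 0 ≤ x) (h : y^2 ≤ x^2) : y ≤ x := by nlinarith

private lemma cross_nonneg {a b c p q r : ℝ} (ha : 0 ≤ a) (hc : 0 ≤ c) (hF : b^2 ≤ a*c)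
    (hp : 0 ≤ p) (hr : 0 ≤ r) (hS : q^2 ≤ p*r) : 0 ≤ a*r + c*p - 2*b*q := by
  have h1 : (2*b*q)^2 ≤ (a*r + c*p)^2 := by
    nlinarith [sq_nonneg (a*r - c*p), mul_le_mul hF hS (sq_nonneg q) (mul_nonneg ha hc)]
  have h2 : 2*b*q ≤ a*r + c*p :=
    sq_le_imp (by positivity) h1
  linarith

set_option maxHeartbeats 1000000 in
private lemma key_scalar {a b c p q r u v w : ℝ} (ha : 0 ≤ a) (hc : 0 ≤ c) (hF : b^2 ≤ a*c)
    (hp : 0 ≤ p) (hr : 0 ≤ r) (hS : q^2 ≤ p*r)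
    (hu : 0 ≤ u) (hw : 0 ≤ w) (hD : v^2 ≤ u*w) :
    ((a+p+u)*(c+r+w) - (b+q+v)^2) * (a*c - b^2)
      ≤ ((a+u)*(c+w) - (b+v)^2) * ((a+p)*(c+r) - (b+q)^2) := by
  set s1 : ℝ := p*b^2 + r*a^2 - 2*q*(a*b) with hs1def
  set s2 : ℝ := p*c^2 + r*b^2 - 2*q*(b*c) with hs2def
  set X : ℝ := q*(a*c + b^2) - p*(b*c) - r*(a*b) with hXdef
  have hs1 : 0 ≤ s1 := by
    have h := cross_nonneg (a := a^2) (b := a*b) (c := b^2)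
      (sq_nonneg a) (sq_nonneg b) (le_of_eq (by ring)) hp hr hS
    rw [hs1def]; nlinarith [h]
  have hs2 : 0 ≤ s2 := by
    have h := cross_nonneg (a := b^2) (b := b*c) (c := c^2)
      (sq_nonneg b) (sq_nonneg c) (le_of_eq (by ring)) hp hr hS
    rw [hs2def]; nlinarith [h]
  have hX2 : X^2 ≤ s1*s2 := by
    have hid : s1*s2 - X^2 = (p*r - q^2)*(a*c - b^2)^2 := by
      rw [hs1def, hs2def, hXdef]; ring
    nlinarith [sq_nonneg (a*c - b^2)]
  have hCFS : 0 ≤ a*r + c*p - 2*b*q := cross_nonneg ha hc hF hp hr hS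
  have hCFD : 0 ≤ a*w + c*u - 2*b*v := cross_nonneg ha hc hF hu hw hD
  have hT : 0 ≤ w*s1 + u*s2 + 2*v*X := by
    have h1 : (-(2*v*X))^2 ≤ (w*s1 + u*s2)^2 := by
      nlinarith [sq_nonneg (w*s1 - u*s2),
        mul_le_mul hD hX2 (sq_nonneg X) (mul_nonneg hu hw)]
    have h2 : -(2*v*X) ≤ w*s1 + u*s2 := by
      have hx : 0 ≤ w*s1 + u*s2 := by positivity
      exact sq_le_imp hx h1
    linarith
  have hid : ((a+u)*(c+w) - (b+v)^2) * ((a+p)*(c+r) - (b+q)^2)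
      - ((a+p+u)*(c+r+w) - (b+q+v)^2) * (a*c - b^2)
      = (u*w - v^2)*(p*r - q^2) + (u*w - v^2)*(a*r + c*p - 2*b*q)
        + (p*r - q^2)*(a*w + c*u - 2*b*v) + (w*s1 + u*s2 + 2*v*X) := by
    rw [hs1def, hs2def, hXdef]; ring
  have huw : (0:ℝ) ≤ u*w - v^2 := by nlinarith [sq_nonneg v]
  have hpr : (0:ℝ) ≤ p*r - q^2 := by nlinarith [sq_nonneg q]
  linarith [hid, mul_nonneg huw hpr, mul_nonneg huw hCFS, mul_nonneg hpr hCFD, hT]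

private lemma psd_entries {M : Matrix (Fin 2) (Fin 2) ℝ} (h : M.PosSemidef) :
    0 ≤ M 0 0 ∧ 0 ≤ M 1 1 ∧ M 1 0 = M 0 1 ∧ (M 0 1)^2 ≤ M 0 0 * M 1 1 := by
  have hsym : M 1 0 = M 0 1 := by simpa using h.1.apply 0 1
  have hq : ∀ x : Fin 2 → ℝ,
      0 ≤ M 0 0 * (x 0 * x 0) + (M 0 1 + M 1 0) * (x 0 * x 1) + M 1 1 * (x 1 * x 1) := by
    intro x
    have := h.dotProduct_mulVec_nonneg x
    simp only [star_trivial, dotProduct, mulVec, Fin.sum_univ_two] at this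
    nlinarith [this]
  have h00 : 0 ≤ M 0 0 := by have := hq ![1, 0]; simpa using this
  have h11 : 0 ≤ M 1 1 := by have := hq ![0, 1]; simpa using this
  refine ⟨h00, h11, hsym, ?_⟩
  have hd : discrim (M 0 0) (M 0 1 + M 1 0) (M 1 1) ≤ 0 := by
    apply discrim_le_zero
    intro t
    have := hq ![t, 1]
    simpa using this
  rw [discrim, hsym] at hd
  nlinarith [hd]

private lemma pd_entries {M : Matrix (Fin 2) (Fin 2) ℝ} (h : M.PosDef) :
    0 ≤ M 0 0 ∧ 0 ≤ M 1 1 ∧ M 1 0 = M 0 1 ∧ (M 0 1)^2 ≤ M 0 0 * M 1 1 ∧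
      0 < M 0 0 * M 1 1 - M 0 1 * M 1 0 := by
  obtain ⟨h00, h11, hsym, hdet⟩ := psd_entries h.posSemidef
  have := h.det_pos
  rw [Matrix.det_fin_two] at this
  exact ⟨h00, h11, hsym, hdet, by linarith⟩

private lemma det_add_mono {F S : Matrix (Fin 2) (Fin 2) ℝ}
    (hF : F.PosDef) (hS : S.PosSemidef) : F.det ≤ (F + S).det := by
  obtain ⟨ha, hc, hsymF, hF2, hdF⟩ := pd_entries hF
  obtain ⟨hp, hr, hsymS, hS2⟩ := psd_entries hS
  have hC := cross_nonneg ha hc hF2 hp hr hS2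
  simp only [Matrix.det_fin_two, Matrix.add_apply, hsymF, hsymS]
  nlinarith [hC, hS2, mul_nonneg hp hr]

private lemma det_submod {F S D : Matrix (Fin 2) (Fin 2) ℝ}
    (hF : F.PosDef) (hS : S.PosSemidef) (hD : D.PosSemidef) :
    (F + S + D).det * F.det ≤ (F + D).det * (F + S).det := by
  obtain ⟨ha, hc, hsymF, hF2, hdF⟩ := pd_entries hF
  obtain ⟨hp, hr, hsymS, hS2⟩ := psd_entries hS
  obtain ⟨hu, hw, hsymD, hD2⟩ := psd_entries hD
  have key := key_scalar ha hc hF2 hp hr hS2 hu hw hD2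
  simp only [Matrix.det_fin_two, Matrix.add_apply, hsymF, hsymS, hsymD]
  nlinarith [key]

private lemma psd_sum {ι : Type*} [DecidableEq ι] (H : ι → Matrix (Fin 2) (Fin 2) ℝ)
    (hH : ∀ y, (H y).PosSemidef) (Y : Finset ι) : (∑ y ∈ Y, H y).PosSemidef := by
  classical
  induction Y using Finset.induction_on with
  | empty => simpa using Matrix.PosSemidef.zero
  | insert _ _ hx ih =>
    rename_i a s
    rw [Finset.sum_insert hx]
    exact (hH a).add ih

/-- for a symmetric positive definite `F_p` and symmetric positive
semidefinite matrices `H_y`, the set function `f_Pd` vanishes on `∅`, is monotone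
nondecreasing, and is submodular. -/
theorem fPd_empty_monotone_submodular {ι : Type*} [Fintype ι] [DecidableEq ι]
    (Fp : Matrix (Fin 2) (Fin 2) ℝ) (H : ι → Matrix (Fin 2) (Fin 2) ℝ)
    (hFp : Fp.PosDef) (hH : ∀ y, (H y).PosSemidef) :
    fPd Fp H (∅ : Finset ι) = 0 ∧
      (∀ A B : Finset ι, A ⊆ B → fPd Fp H A ≤ fPd Fp H B) ∧
      ∀ A B : Finset ι, A ⊆ B → ∀ y ∉ B,
        fPd Fp H (insert y B) - fPd Fp H B ≤ fPd Fp H (insert y A) - fPd Fp H A := by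
  have hPD : ∀ Y : Finset ι, (Fp + ∑ y ∈ Y, H y).PosDef := fun Y =>
    hFp.add_posSemidef (psd_sum H hH Y)
  have hsumsplit : ∀ A B : Finset ι, A ⊆ B →
      Fp + ∑ y ∈ B, H y = (Fp + ∑ y ∈ A, H y) + ∑ y ∈ B \ A, H y := by
    intro A B hAB
    rw [add_assoc, ← Finset.sum_sdiff hAB, add_comm (∑ y ∈ B \ A, H y)]
  refine ⟨?_, ?_, ?_⟩
  · simp [fPd]
  · intro A B hAB
    apply sub_le_sub_right
    apply Real.log_le_log (hPD A).det_pos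
    rw [hsumsplit A B hAB]
    exact det_add_mono (hPD A) (psd_sum H hH _)
  · intro A B hAB y hyB
    have hyA : y ∉ A := fun h => hyB (hAB h)
    simp only [fPd, Finset.sum_insert hyA, Finset.sum_insert hyB]
    set FA := Fp + ∑ x ∈ A, H x with hFA
    set S := ∑ x ∈ B \ A, H x with hSdef
    have hSpsd : S.PosSemidef := psd_sum H hH _
    have hDpsd : (H y).PosSemidef := hH y
    have hFAB : Fp + ∑ x ∈ B, H x = FA + S := hsumsplit A B hAB
    have hFAy : Fp + (H y + ∑ x ∈ A, H x) = FA + H y := by rw [hFA]; abel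
    have hFBy : Fp + (H y + ∑ x ∈ B, H x) = FA + S + H y := by
      rw [hFA, hSdef, ← Finset.sum_sdiff hAB]; abel
    rw [hFAB, hFAy, hFBy]
    have hFApd : FA.PosDef := hPD A
    have hFSpd : (FA + S).PosDef := hFApd.add_posSemidef hSpsd
    have hFDpd : (FA + H y).PosDef := hFApd.add_posSemidef hDpsd
    have hFSDpd : (FA + S + H y).PosDef := hFSpd.add_posSemidef hDpsd
    have d1 := hFSDpd.det_pos
    have d2 := hFApd.det_pos
    have d3 := hFDpd.det_pos
    have d4 := hFSpd.det_pos
    have key := det_submod hFApd hSpsd hDpsd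
    have h1 : Real.log ((FA + S + H y).det * FA.det)
        ≤ Real.log ((FA + H y).det * (FA + S).det) :=
      Real.log_le_log (mul_pos d1 d2) key
    rw [Real.log_mul d1.ne' d2.ne', Real.log_mul d3.ne' d4.ne'] at h1
    linarith
end

section
/- Let M̄ be a finite ground set, c : M̄ → ℝ_{>0} a cost function, B > 0 a budget with c(y) ≤ B for all y ∈ M̄, and f : 2^{M̄} → ℝ≥0 a monotone nondecreasing submodular set function with f(∅) = 0. Let f̂ : 2^{M̄} → ℝ be an approximate oracle satisfying f̂(∅) = 0 and |f̂(Y) − f(Y)| ≤ ε/2 for all Y ⊆ M̄, where ε ≥ 0. Run the following greedy algorithm using f̂: set Y₁ ∈ argmax_{y∈M̄} f̂({y}); initialize Y₂ = ∅ and candidate set C = M̄; while C ≠ ∅, pick y* ∈ argmax_{y∈C} (f̂({y} ∪ Y₂) − f̂(Y₂))/c(y), add y* to Y₂ if c(y*) + c(Y₂) ≤ B, and remove y* from C; finally output Y_g as whichever of Y₁, Y₂ has the larger f̂ value. Then f(Y_g) ≥ (1/2)(1 − e⁻¹) f(Y*) − (B/c_min + 3/2) ε, where Y* is any maximizer of f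 over {Y ⊆ M̄ : c(Y) ≤ B} and c_min = min_{y∈M̄} c(y). -/
open Finset

lemma submod_sum_bound {ι : Type*} [DecidableEq ι] (f : Finset ι → ℝ)
    (hsubmod : ∀ A B' : Finset ι, A ⊆ B' → ∀ y ∉ B',
      f (insert y B') - f B' ≤ f (insert y A) - f A) :
    ∀ (S A : Finset ι), f (A ∪ S) - f A ≤ ∑ y ∈ S \ A, (f (insert y A) - f A) := by
  intro S
  induction S using Finset.induction_on with
  | empty => intro A; simp
  | @insert x S' hx ih =>
    intro A
    by_cases hxA : x ∈ A
    · have h1 : A ∪ insert x S' = A ∪ S' := by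
        ext z; simp only [Finset.mem_union, Finset.mem_insert]
        constructor
        · rintro (h | rfl | h) <;> tauto
        · tauto
      have h2 : insert x S' \ A = S' \ A := by
        ext z; simp only [Finset.mem_sdiff, Finset.mem_insert]
        constructor
        · rintro ⟨rfl | h, h2⟩ <;> tauto
        · tauto
      rw [h1, h2]; exact ih A
    · have h2 : insert x S' \ A = insert x (S' \ A) := by
        ext z; simp only [Finset.mem_sdiff, Finset.mem_insert]
        constructor
        · rintro ⟨rfl | h, h2⟩ <;> tauto
        · rintro (rfl | ⟨ha, hb⟩) <;> tauto
      have hxS'A : x ∉ S' \ A := by simp [hx]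
      rw [h2, Finset.sum_insert hxS'A]
      have hq : A ∪ insert x S' = insert x (A ∪ S') := by
        ext z; simp only [Finset.mem_union, Finset.mem_insert]; tauto
      have hxAS : x ∉ A ∪ S' := by simp [hxA, hx]
      have h3 := hsubmod A (A ∪ S') Finset.subset_union_left x hxAS
      have h4 := ih A
      rw [hq]
      linarith


set_option maxHeartbeats 1600000 in
/-- Theorem 3: performance guarantee of the greedy algorithm
(Algorithm 2) for maximizing a monotone nondecreasing submodular set function `f`
(evaluated through an approximate oracle `f̂` with `|f̂(Y) − f(Y)| ≤ ε/2`) subject to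
a knapsack constraint `c(Y) ≤ B`.

The run of the algorithm is encoded by the sequences `C t` (remaining candidates) and
`Y t` (current greedy set) for `t = 0, …, |M̄|`: at each step some `y*` maximizing
`(f̂(Y ∪ {y}) − f̂(Y))/c(y)` over the candidates is removed from `C` and added to `Y`
iff it fits in the budget.  `Y₂ = Y |M̄|` is the final greedy set, `Y₁ = {y₁}` is a
singleton maximizing `f̂({y})`, and the output `Y_g` is whichever of `Y₁, Y₂` has the
larger `f̂`-value.  Then
`f(Y_g) ≥ (1/2)(1 − e⁻¹) f(Y*) − (B/c_min + 3/2) ε`. -/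
theorem greedy_knapsack_submodular_guarantee
    {ι : Type*} [Fintype ι] [DecidableEq ι] [Nonempty ι]
    (c : ι → ℝ) (hc : ∀ y, 0 < c y)
    (B : ℝ) (hB : 0 < B) (hcB : ∀ y, c y ≤ B)
    (f : Finset ι → ℝ) (hfempty : f ∅ = 0) (hfnonneg : ∀ Y, 0 ≤ f Y)
    (hmono : ∀ A B' : Finset ι, A ⊆ B' → f A ≤ f B')
    (hsubmod : ∀ A B' : Finset ι, A ⊆ B' → ∀ y ∉ B',
      f (insert y B') - f B' ≤ f (insert y A) - f A)
    (ε : ℝ) (hε : 0 ≤ ε)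
    (fhat : Finset ι → ℝ) (hfhatempty : fhat ∅ = 0)
    (happrox : ∀ Y : Finset ι, |fhat Y - f Y| ≤ ε / 2)
    -- line 3: Y₁ = {y₁} maximizes f̂ over singletons
    (y₁ : ι) (hy₁ : ∀ y : ι, fhat {y} ≤ fhat {y₁})
    -- lines 4–11: the while loop
    (C Y : ℕ → Finset ι)
    (hC0 : C 0 = Finset.univ) (hY0 : Y 0 = ∅)
    (hstep : ∀ t < Fintype.card ι, ∃ ys ∈ C t,
      (∀ y ∈ C t, (fhat (insert y (Y t)) - fhat (Y t)) / c y ≤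
          (fhat (insert ys (Y t)) - fhat (Y t)) / c ys) ∧
        C (t + 1) = (C t).erase ys ∧
        (c ys + ∑ z ∈ Y t, c z ≤ B → Y (t + 1) = insert ys (Y t)) ∧
        (¬ c ys + ∑ z ∈ Y t, c z ≤ B → Y (t + 1) = Y t))
    -- line 12: the output Y_g
    (Yg : Finset ι)
    (hYg : Yg = {y₁} ∨ Yg = Y (Fintype.card ι))
    (hYgmax : fhat Yg = max (fhat {y₁}) (fhat (Y (Fintype.card ι))))
    -- Y* is an optimal solution of the knapsack-constrained problem
    (Ystar : Finset ι) (hfeas : ∑ y ∈ Ystar, c y ≤ B)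
    (hopt : ∀ Z : Finset ι, ∑ y ∈ Z, c y ≤ B → f Z ≤ f Ystar) :
    f Yg ≥ (1 / 2) * (1 - Real.exp (-1)) * f Ystar -
      (B / (Finset.univ.inf' Finset.univ_nonempty c) + 3 / 2) * ε := by
  classical
  set n := Fintype.card ι with hn
  obtain ⟨y0, -, hy0⟩ := Finset.exists_mem_eq_inf' Finset.univ_nonempty c
  set cmin := Finset.univ.inf' Finset.univ_nonempty c with hcmindef
  have hcmin_pos : 0 < cmin := by rw [hy0]; exact hc y0
  have hcmin_le : ∀ y, cmin ≤ c y := fun y => Finset.inf'_le c (mem_univ y)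
  have hcminB : cmin ≤ B := by rw [hy0]; exact hcB y0
  set K := B / cmin with hKdef
  have hKc : K * cmin = B := div_mul_cancel₀ B (ne_of_gt hcmin_pos)
  have hK1 : 1 ≤ K := by rw [hKdef, le_div_iff₀ hcmin_pos]; linarith
  have hlo : ∀ Z, f Z - ε / 2 ≤ fhat Z := by
    intro Z; have h := abs_le.1 (happrox Z); linarith [h.1]
  have hhi : ∀ Z, fhat Z ≤ f Z + ε / 2 := by
    intro Z; have h := abs_le.1 (happrox Z); linarith [h.2]
  choose! ys hmem hmax hCs hadd hskip using hstep
  have hYstep : ∀ t, t < n → Y t ⊆ Y (t + 1) := by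
    intro t ht
    by_cases hb : c (ys t) + ∑ z ∈ Y t, c z ≤ B
    · rw [hadd t ht hb]; exact Finset.subset_insert _ _
    · rw [hskip t ht hb]
  have hYchain : ∀ s t, s ≤ t → t ≤ n → Y s ⊆ Y t := by
    intro s t hst
    induction t, hst using Nat.le_induction with
    | base => intro _; exact subset_rfl
    | succ t ht ih =>
      intro h
      exact (ih (by omega)).trans (hYstep t (by omega))
  have hinv : ∀ t, t ≤ n → (∀ s, s < t → c (ys s) + ∑ z ∈ Y s, c z ≤ B) →
      C t = univ \ Y t ∧ (Y t).card = t ∧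
        (∑ z ∈ Y t, c z = ∑ s ∈ Finset.range t, c (ys s)) := by
    intro t
    induction t with
    | zero => intro _ _; refine ⟨by simp [hC0, hY0], by simp [hY0], by simp [hY0]⟩
    | succ t ih =>
      intro htn hall
      obtain ⟨hCt, hcard, hsum⟩ := ih (by omega) (fun s hs => hall s (by omega))
      have htn' : t < n := by omega
      have hmem' := hmem t htn'
      have hysY : ys t ∉ Y t := by
        rw [hCt] at hmem'; exact (Finset.mem_sdiff.1 hmem').2
      have hYt1 : Y (t + 1) = insert (ys t) (Y t) := hadd t htn' (hall t (by omega))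
      refine ⟨?_, ?_, ?_⟩
      · rw [hCs t htn', hCt, hYt1]
        ext z
        simp only [Finset.mem_erase, Finset.mem_sdiff, Finset.mem_univ, true_and,
          Finset.mem_insert]
        tauto
      · rw [hYt1, Finset.card_insert_of_notMem hysY, hcard]
      · rw [hYt1, Finset.sum_insert hysY, Finset.sum_range_succ, hsum]; ring
  have hsumc : ∀ S : Finset ι, S ⊆ Ystar → ∑ y ∈ S, c y ≤ B := fun S hS =>
    le_trans (Finset.sum_le_sum_of_subset_of_nonneg hS (fun y _ _ => (hc y).le)) hfeas
  have hcard_bound : ∀ S : Finset ι, S ⊆ Ystar → (S.card : ℝ) ≤ K := by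
    intro S hS
    have h1 : (S.card : ℝ) * cmin ≤ ∑ y ∈ S, c y := by
      calc (S.card : ℝ) * cmin = ∑ _y ∈ S, cmin := by
            rw [Finset.sum_const, nsmul_eq_mul]
        _ ≤ ∑ y ∈ S, c y := Finset.sum_le_sum (fun y _ => hcmin_le y)
    have h2 := hsumc S hS
    rw [hKdef, le_div_iff₀ hcmin_pos]; linarith
  have hkey : ∀ t, C t = univ \ Y t →
      f Ystar - f (Y t) ≤
        ∑ y ∈ Ystar \ Y t, ((fhat (insert y (Y t)) - fhat (Y t)) + ε) := by
    intro t hCt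
    have h1 : f Ystar ≤ f (Y t ∪ Ystar) := hmono _ _ Finset.subset_union_right
    have h2 := submod_sum_bound f hsubmod Ystar (Y t)
    have h3 : ∑ y ∈ Ystar \ Y t, (f (insert y (Y t)) - f (Y t)) ≤
        ∑ y ∈ Ystar \ Y t, ((fhat (insert y (Y t)) - fhat (Y t)) + ε) := by
      refine Finset.sum_le_sum fun y _ => ?_
      linarith [hhi (Y t), hlo (insert y (Y t))]
    linarith
  have hgain : ∀ t, t < n → ∀ y ∈ C t,
      fhat (insert y (Y t)) - fhat (Y t) ≤
        (c y / c (ys t)) * (fhat (insert (ys t) (Y t)) - fhat (Y t)) := by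
    intro t ht y hy
    have h := hmax t ht y hy
    rw [div_le_div_iff₀ (hc y) (hc (ys t))] at h
    rw [div_mul_eq_mul_div, le_div_iff₀ (hc (ys t))]
    nlinarith [h]
  have hδkey : ∀ t, t < n → C t = univ \ Y t →
      0 ≤ fhat (insert (ys t) (Y t)) - fhat (Y t) →
      c (ys t) * (f Ystar - f (Y t)) ≤
        B * (fhat (insert (ys t) (Y t)) - fhat (Y t)) + c (ys t) * (K * ε) := by
    intro t ht hCt hδ
    set δ := fhat (insert (ys t) (Y t)) - fhat (Y t) with hδdef
    have h1 := hkey t hCt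
    have h2 : ∑ y ∈ Ystar \ Y t, ((fhat (insert y (Y t)) - fhat (Y t)) + ε) ≤
        ∑ y ∈ Ystar \ Y t, ((c y / c (ys t)) * δ + ε) := by
      refine Finset.sum_le_sum fun y hy => ?_
      have hyC : y ∈ C t := by
        rw [hCt]; rw [Finset.mem_sdiff] at hy ⊢
        exact ⟨Finset.mem_univ _, hy.2⟩
      linarith [hgain t ht y hyC]
    have h3 : ∑ y ∈ Ystar \ Y t, ((c y / c (ys t)) * δ + ε) =
        (∑ y ∈ Ystar \ Y t, c y) * (δ / c (ys t)) + ((Ystar \ Y t).card : ℝ) * ε := by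
      rw [Finset.sum_add_distrib, Finset.sum_const, nsmul_eq_mul, Finset.sum_mul]
      congr 1
      exact Finset.sum_congr rfl fun y _ => by ring
    have hr : 0 ≤ δ / c (ys t) := div_nonneg hδ (hc (ys t)).le
    have h4 : (∑ y ∈ Ystar \ Y t, c y) * (δ / c (ys t)) ≤ B * (δ / c (ys t)) :=
      mul_le_mul_of_nonneg_right (hsumc _ Finset.sdiff_subset) hr
    have h5 : ((Ystar \ Y t).card : ℝ) * ε ≤ K * ε :=
      mul_le_mul_of_nonneg_right (hcard_bound _ Finset.sdiff_subset) hε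
    have h6 : f Ystar - f (Y t) ≤ B * (δ / c (ys t)) + K * ε := by linarith
    have h8 := mul_le_mul_of_nonneg_left h6 (hc (ys t)).le
    have h9 : c (ys t) * (B * (δ / c (ys t)) + K * ε) = B * δ + c (ys t) * (K * ε) := by
      have hcne : c (ys t) ≠ 0 := ne_of_gt (hc (ys t))
      field_simp
    rw [h9] at h8
    exact h8
  have hshort : ∀ t, t < n → C t = univ \ Y t →
      fhat (insert (ys t) (Y t)) - fhat (Y t) < 0 →
      f Ystar - f (Y t) ≤ K * ε := by
    intro t ht hCt hδ
    have h1 := hkey t hCt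
    have h2 : ∑ y ∈ Ystar \ Y t, ((fhat (insert y (Y t)) - fhat (Y t)) + ε) ≤
        ∑ _y ∈ Ystar \ Y t, ε := by
      refine Finset.sum_le_sum fun y hy => ?_
      have hyC : y ∈ C t := by
        rw [hCt]; rw [Finset.mem_sdiff] at hy ⊢
        exact ⟨Finset.mem_univ _, hy.2⟩
      have h3 := hgain t ht y hyC
      have h4 : (c y / c (ys t)) * (fhat (insert (ys t) (Y t)) - fhat (Y t)) ≤ 0 :=
        mul_nonpos_of_nonneg_of_nonpos (div_nonneg (hc y).le (hc (ys t)).le) hδ.le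
      linarith
    have h5 : ∑ _y ∈ Ystar \ Y t, ε ≤ K * ε := by
      rw [Finset.sum_const, nsmul_eq_mul]
      exact mul_le_mul_of_nonneg_right (hcard_bound _ Finset.sdiff_subset) hε
    linarith
  have hYgf1 : fhat {y₁} ≤ fhat Yg := by rw [hYgmax]; exact le_max_left _ _
  have hYgf2 : fhat (Y n) ≤ fhat Yg := by rw [hYgmax]; exact le_max_right _ _
  have hexp0 : 0 < Real.exp (-1) := Real.exp_pos _
  have hfin : f Ystar - (K + 1) * ε ≤ f Yg →
      f Yg ≥ 1 / 2 * (1 - Real.exp (-1)) * f Ystar - (K + 3 / 2) * ε := by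
    intro h
    nlinarith [hfnonneg Ystar, hε, hK1, mul_nonneg (hfnonneg Ystar) hexp0.le]
  by_cases hA : ∀ t, t < n → c (ys t) + ∑ z ∈ Y t, c z ≤ B
  · obtain ⟨hCn, hcard, -⟩ := hinv n le_rfl (fun s hs => hA s hs)
    have hYn : Y n = univ := Finset.eq_univ_of_card _ hcard
    apply hfin
    have h1 : f Ystar ≤ f (Y n) := by rw [hYn]; exact hmono _ _ (Finset.subset_univ _)
    have hKε : 0 ≤ K * ε := mul_nonneg (by linarith) hε
    linarith [hlo (Y n), hhi Yg, hYgf2]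
  · push_neg at hA
    obtain ⟨t₀, ht₀n, ht₀⟩ := hA
    have hex : ∃ t, t < n ∧ ¬ c (ys t) + ∑ z ∈ Y t, c z ≤ B := ⟨t₀, ht₀n, by linarith⟩
    obtain ⟨hTn, hTrej⟩ := Nat.find_spec hex
    have hTmin : ∀ s, s < Nat.find hex → c (ys s) + ∑ z ∈ Y s, c z ≤ B := by
      intro s hs
      have h := Nat.find_min hex hs
      push_neg at h
      exact h (by omega)
    set T := Nat.find hex with hTdef
    have hinvT : ∀ t, t ≤ T → C t = univ \ Y t ∧ (Y t).card = t ∧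
        (∑ z ∈ Y t, c z = ∑ s ∈ Finset.range t, c (ys s)) :=
      fun t ht => hinv t (by omega) (fun s hs => hTmin s (by omega))
    clear_value T
    clear hTdef
    by_cases hneg : ∃ t, t ≤ T ∧ fhat (insert (ys t) (Y t)) - fhat (Y t) < 0
    · obtain ⟨t, htT, hδ⟩ := hneg
      have hCt := (hinvT t htT).1
      have h1 := hshort t (by omega) hCt hδ
      have h2 : f (Y t) ≤ f (Y n) := hmono _ _ (hYchain t n (by omega) le_rfl)
      apply hfin
      linarith [hlo (Y n), hhi Yg, hYgf2]
    · push_neg at hneg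
      have hrec : ∀ t, t ≤ T →
          f Ystar - f (insert (ys t) (Y t)) - 2 * K * ε ≤
            (1 - c (ys t) / B) * (f Ystar - f (Y t) - 2 * K * ε) := by
        intro t ht
        have hCt := (hinvT t ht).1
        have hδ := hneg t ht
        have h1 := hδkey t (by omega) hCt hδ
        have h2 : fhat (insert (ys t) (Y t)) - fhat (Y t) ≤
            f (insert (ys t) (Y t)) - f (Y t) + ε := by
          linarith [hhi (insert (ys t) (Y t)), hlo (Y t)]
        have hcK : B ≤ c (ys t) * K := by
          calc B = K * cmin := hKc.symm
            _ ≤ K * c (ys t) :=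
                mul_le_mul_of_nonneg_left (hcmin_le _) (by linarith)
            _ = c (ys t) * K := mul_comm _ _
        have hmain : c (ys t) * ((f Ystar - f (Y t)) - 2 * K * ε) ≤
            B * (f (insert (ys t) (Y t)) - f (Y t)) := by
          nlinarith [h1, mul_le_mul_of_nonneg_left h2 hB.le,
            mul_le_mul_of_nonneg_right hcK hε]
        have hfactor : (1 - c (ys t) / B) * (f Ystar - f (Y t) - 2 * K * ε) =
            f Ystar - f (Y t) - 2 * K * ε -
              (c (ys t) * ((f Ystar - f (Y t)) - 2 * K * ε)) / B := by
          field_simp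
        have hdivle : (c (ys t) * ((f Ystar - f (Y t)) - 2 * K * ε)) / B ≤
            f (insert (ys t) (Y t)) - f (Y t) := by
          rw [div_le_iff₀ hB]
          nlinarith [hmain]
        rw [hfactor]
        linarith
      have hprod_nonneg : ∀ s : ℕ, 0 ≤ 1 - c (ys s) / B := by
        intro s
        have h : c (ys s) / B ≤ 1 := (div_le_one hB).2 (hcB (ys s))
        linarith
      have hprodprod_nonneg : ∀ t : ℕ,
          0 ≤ ∏ s ∈ Finset.range t, (1 - c (ys s) / B) :=
        fun t => Finset.prod_nonneg fun s _ => hprod_nonneg s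
      have hunroll : ∀ t, t ≤ T →
          f Ystar - f (Y t) - 2 * K * ε ≤
            (∏ s ∈ Finset.range t, (1 - c (ys s) / B)) * (f Ystar - 2 * K * ε) := by
        intro t
        induction t with
        | zero => intro _; simp [hY0, hfempty]
        | succ t ih =>
          intro ht
          have ht' : t ≤ T := by omega
          have h1 := ih ht'
          have h2 := hrec t ht'
          have hYt1 : Y (t + 1) = insert (ys t) (Y t) :=
            hadd t (by omega) (hTmin t (by omega))
          rw [hYt1, Finset.prod_range_succ]
          calc f Ystar - f (insert (ys t) (Y t)) - 2 * K * ε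
              ≤ (1 - c (ys t) / B) * (f Ystar - f (Y t) - 2 * K * ε) := h2
            _ ≤ (1 - c (ys t) / B) *
                ((∏ s ∈ Finset.range t, (1 - c (ys s) / B)) * (f Ystar - 2 * K * ε)) :=
                mul_le_mul_of_nonneg_left h1 (hprod_nonneg t)
            _ = (∏ s ∈ Finset.range t, (1 - c (ys s) / B)) * (1 - c (ys t) / B) *
                (f Ystar - 2 * K * ε) := by ring
      have hfinal : f Ystar - f (insert (ys T) (Y T)) - 2 * K * ε ≤
          (∏ s ∈ Finset.range (T + 1), (1 - c (ys s) / B)) * (f Ystar - 2 * K * ε) := by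
        have h2 := hrec T le_rfl
        have h1 := hunroll T le_rfl
        rw [Finset.prod_range_succ]
        calc f Ystar - f (insert (ys T) (Y T)) - 2 * K * ε
            ≤ (1 - c (ys T) / B) * (f Ystar - f (Y T) - 2 * K * ε) := h2
          _ ≤ (1 - c (ys T) / B) *
              ((∏ s ∈ Finset.range T, (1 - c (ys s) / B)) * (f Ystar - 2 * K * ε)) :=
              mul_le_mul_of_nonneg_left h1 (hprod_nonneg T)
          _ = (∏ s ∈ Finset.range T, (1 - c (ys s) / B)) * (1 - c (ys T) / B) *
              (f Ystar - 2 * K * ε) := by ring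
      by_cases hb0 : f Ystar - 2 * K * ε ≤ 0
      · nlinarith [hfnonneg Yg, hfnonneg Ystar, hexp0, hε, hK1,
          mul_nonneg (hfnonneg Ystar) hexp0.le]
      · push_neg at hb0
        have hsumT : B < ∑ s ∈ Finset.range (T + 1), c (ys s) := by
          obtain ⟨-, -, hsum⟩ := hinvT T le_rfl
          rw [Finset.sum_range_succ, ← hsum]
          push_neg at hTrej
          linarith
        have hprodle : (∏ s ∈ Finset.range (T + 1), (1 - c (ys s) / B)) ≤
            Real.exp (-1) := by
          calc (∏ s ∈ Finset.range (T + 1), (1 - c (ys s) / B))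
              ≤ ∏ s ∈ Finset.range (T + 1), Real.exp (-(c (ys s) / B)) := by
                refine Finset.prod_le_prod (fun s _ => hprod_nonneg s) (fun s _ => ?_)
                linarith [Real.add_one_le_exp (-(c (ys s) / B))]
            _ = Real.exp (∑ s ∈ Finset.range (T + 1), -(c (ys s) / B)) :=
              (Real.exp_sum _ _).symm
            _ ≤ Real.exp (-1) := by
              apply Real.exp_le_exp.2
              have heq : ∑ s ∈ Finset.range (T + 1), -(c (ys s) / B) =
                  -((∑ s ∈ Finset.range (T + 1), c (ys s)) / B) := by
                rw [Finset.sum_div, ← Finset.sum_neg_distrib]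
              rw [heq]
              have h1 : 1 ≤ (∑ s ∈ Finset.range (T + 1), c (ys s)) / B :=
                (one_le_div hB).2 hsumT.le
              linarith
        have hexp_bound : (∏ s ∈ Finset.range (T + 1), (1 - c (ys s) / B)) *
            (f Ystar - 2 * K * ε) ≤ Real.exp (-1) * f Ystar := by
          have h1 := mul_le_mul_of_nonneg_right hprodle hb0.le
          have h2 : Real.exp (-1) * (f Ystar - 2 * K * ε) ≤ Real.exp (-1) * f Ystar := by
            apply mul_le_mul_of_nonneg_left _ hexp0.le
            nlinarith [mul_nonneg (show (0:ℝ) ≤ K by linarith) hε]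
          linarith
        have hins : (1 - Real.exp (-1)) * f Ystar - 2 * K * ε ≤
            f (insert (ys T) (Y T)) := by
          nlinarith [hfinal, hexp_bound]
        have hCT := (hinvT T le_rfl).1
        have huT : ys T ∉ Y T := by
          have h := hmem T hTn
          rw [hCT] at h
          exact (Finset.mem_sdiff.1 h).2
        have hsub := hsubmod ∅ (Y T) (Finset.empty_subset _) (ys T) huT
        have h1 : f {ys T} ≤ f Yg + ε := by
          linarith [hlo {ys T}, hy₁ (ys T), hhi Yg]
        have h2 : f (Y T) ≤ f Yg + ε := by
          have hTle : f (Y T) ≤ f (Y n) := hmono _ _ (hYchain T n (by omega) le_rfl)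
          linarith [hlo (Y n), hhi Yg]
        have h3 : f (insert (ys T) (Y T)) ≤ 2 * f Yg + 2 * ε := by
          have h4 : f (insert (ys T) ∅) = f {ys T} := by norm_num
          rw [h4, hfempty] at hsub
          linarith
        linarith [hins, h3, hε]
end

section
/- Let M̄ be a finite ground set, c : M̄ → ℝ_{>0} a cost function, B > 0 a budget with c(y) ≤ B for all y ∈ M̄, and f : 2^{M̄} → ℝ≥0 a monotone nondecreasing set function with f(∅) = 0 (in the paper, f = f_Pa(Y) = Tr(F_p⁻¹) − Tr((F_p + ∑_{y∈Y} H_y)⁻¹) for a 2×2 symmetric positive definite F_p and 2×2 symmetric positive semidefinite matrices H_y). Let f̂ : 2^{M̄} → ℝ be an approximate oracle satisfying f̂(∅) = 0 and |f̂(Y) − f(Y)| ≤ ε/2 for all Y ⊆ M̄, where ε ≥ 0. Run the greedy algorithm: set Y₁ ∈ argmax_{y∈M̄} f̂({y}); initialize Y₂ = ∅ and candidate set C = M̄; while C ≠ ∅, pick y* ∈ argmax_{y∈C} (f̂({y} ∪ Y₂) − f̂(Y₂))/c(y), add y* to Y₂ if c(y*) + c(Y₂) ≤ B, and remove y* from C;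 output Y_g as whichever of Y₁, Y₂ has the larger f̂ value. For j = 0,...,|Y₂| let Y₂^j be the set of the first j elements added to Y₂ (Y₂⁰ = ∅). Let γ₁ be the largest real number such that ∑_{y∈A\Y₂^j} ( f({y} ∪ Y₂^j) − f(Y₂^j) ) ≥ γ₁ ( f(A ∪ Y₂^j) − f(Y₂^j) ) for all A ⊆ M̄ and all j ∈ {0,...,|Y₂|}, and let γ₂ be the largest real number such that f(Y₁) − f(∅) ≥ γ₂ ( f({y} ∪ Y₂^j) − f(Y₂^j) ) for all j ∈ {0,...,|Y₂|} and all y ∈ M̄ \ Y₂^j with c(y) + c(Y₂^j) > B. Then f(Y_g) ≥ (min{γ₂,1}/2)(1 − e^{−γ₁}) f(Y*) − ((B + c_max)/c_min + 1) ε, where Y* is any maximizer of f over {Y ⊆ M̄ : c(Y) ≤ B}, c_min = min_{y∈M̄} c(y), and c_max = max_{y∈M̄} c(y). -/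
open Finset

set_option maxHeartbeats 2000000 in
/-- Theorem 4: performance guarantee of the greedy algorithm
(Algorithm 2) for maximizing a monotone nondecreasing (not necessarily submodular)
nonnegative set function `f` with `f(∅) = 0`, evaluated through an approximate oracle
`f̂` with `|f̂(Y) − f(Y)| ≤ ε/2`, subject to a knapsack constraint `c(Y) ≤ B`.

The run of the algorithm is encoded by the sequences `C t` (remaining candidates) and
`Y t` (current greedy set) for `t = 0, …, |M̄|`; the sets `Y t`, `t ≤ |M̄|`, are exactly
the prefix sets `Y₂^j` of the final greedy set `Y₂ = Y |M̄|`.  `γ₁` and `γ₂` are the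
type-1 and type-2 greedy submodularity ratios of `f` (Definition 7): the largest reals
satisfying the respective inequalities relative to the greedy prefix sets.  Then
`f(Y_g) ≥ (min{γ₂,1}/2)(1 − e^{−γ₁}) f(Y*) − ((B + c_max)/c_min + 1) ε`. -/
theorem greedy_knapsack_nonsubmodular_guarantee
    {ι : Type*} [Fintype ι] [DecidableEq ι] [Nonempty ι]
    (c : ι → ℝ) (hc : ∀ y, 0 < c y)
    (B : ℝ) (hB : 0 < B) (hcB : ∀ y, c y ≤ B)
    (f : Finset ι → ℝ) (hfempty : f ∅ = 0) (hfnonneg : ∀ Y, 0 ≤ f Y)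
    (hmono : ∀ A B' : Finset ι, A ⊆ B' → f A ≤ f B')
    (ε : ℝ) (hε : 0 ≤ ε)
    (fhat : Finset ι → ℝ) (hfhatempty : fhat ∅ = 0)
    (happrox : ∀ Y : Finset ι, |fhat Y - f Y| ≤ ε / 2)
    -- line 3: Y₁ = {y₁} maximizes f̂ over singletons
    (y₁ : ι) (hy₁ : ∀ y : ι, fhat {y} ≤ fhat {y₁})
    -- lines 4–11: the while loop
    (C Y : ℕ → Finset ι)
    (hC0 : C 0 = Finset.univ) (hY0 : Y 0 = ∅)
    (hstep : ∀ t < Fintype.card ι, ∃ ys ∈ C t,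
      (∀ y ∈ C t, (fhat (insert y (Y t)) - fhat (Y t)) / c y ≤
          (fhat (insert ys (Y t)) - fhat (Y t)) / c ys) ∧
        C (t + 1) = (C t).erase ys ∧
        (c ys + ∑ z ∈ Y t, c z ≤ B → Y (t + 1) = insert ys (Y t)) ∧
        (¬ c ys + ∑ z ∈ Y t, c z ≤ B → Y (t + 1) = Y t))
    -- line 12: the output Y_g
    (Yg : Finset ι)
    (hYg : Yg = {y₁} ∨ Yg = Y (Fintype.card ι))
    (hYgmax : fhat Yg = max (fhat {y₁}) (fhat (Y (Fintype.card ι))))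
    -- γ₁: type-1 greedy submodularity ratio (largest real satisfying Eq. (33))
    (γ₁ : ℝ)
    (hγ₁ : IsGreatest {g : ℝ | ∀ A : Finset ι, ∀ t ≤ Fintype.card ι,
      g * (f (A ∪ Y t) - f (Y t)) ≤
        ∑ y ∈ A \ Y t, (f (insert y (Y t)) - f (Y t))} γ₁)
    -- γ₂: type-2 greedy submodularity ratio (largest real satisfying Eq. (34))
    (γ₂ : ℝ)
    (hγ₂ : IsGreatest {g : ℝ | ∀ t ≤ Fintype.card ι, ∀ y ∉ Y t,
      B < c y + ∑ z ∈ Y t, c z →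
        g * (f (insert y (Y t)) - f (Y t)) ≤ f {y₁} - f ∅} γ₂)
    -- Y* is an optimal solution of the knapsack-constrained problem
    (Ystar : Finset ι) (hfeas : ∑ y ∈ Ystar, c y ≤ B)
    (hopt : ∀ Z : Finset ι, ∑ y ∈ Z, c y ≤ B → f Z ≤ f Ystar) :
    f Yg ≥ (min γ₂ 1 / 2) * (1 - Real.exp (-γ₁)) * f Ystar -
      ((B + Finset.univ.sup' Finset.univ_nonempty c) /
          (Finset.univ.inf' Finset.univ_nonempty c) + 1) * ε := by
  classical
  set n := Fintype.card ι with hn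
  set cmin := Finset.univ.inf' Finset.univ_nonempty c with hcmindef
  set cmax := Finset.univ.sup' Finset.univ_nonempty c with hcmaxdef
  have hcmin_pos : 0 < cmin := by
    rw [hcmindef]
    exact (Finset.lt_inf'_iff _).mpr (fun y _ => hc y)
  have hcmin_le : ∀ y, cmin ≤ c y := fun y => Finset.inf'_le _ (mem_univ y)
  have hle_cmax : ∀ y, c y ≤ cmax := fun y => Finset.le_sup' _ (mem_univ y)
  have hcmax_le_B : cmax ≤ B := Finset.sup'_le _ _ (fun y _ => hcB y)
  have hcmax_pos : 0 < cmax :=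
    lt_of_lt_of_le hcmin_pos (le_trans (hcmin_le (Classical.arbitrary ι)) (hle_cmax _))
  have hK0 : (0:ℝ) ≤ (B + cmax) / cmin := div_nonneg (by linarith) hcmin_pos.le
  have hup : ∀ Z, fhat Z ≤ f Z + ε / 2 := by
    intro Z; have h := abs_le.mp (happrox Z); linarith [h.1, h.2]
  have hlow : ∀ Z, f Z - ε / 2 ≤ fhat Z := by
    intro Z; have h := abs_le.mp (happrox Z); linarith [h.1, h.2]
  have hfstar0 : 0 ≤ f Ystar := hfnonneg Ystar
  -- ratio bounds
  have hγ₁0 : 0 ≤ γ₁ := by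
    refine hγ₁.2 ?_
    intro A t htn
    rw [zero_mul]
    exact Finset.sum_nonneg fun y _ => sub_nonneg.mpr (hmono _ _ (subset_insert _ _))
  have hγ₂0 : 0 ≤ γ₂ := by
    refine hγ₂.2 ?_
    intro t htn y hy hby
    rw [zero_mul, hfempty]
    linarith [hfnonneg ({y₁} : Finset ι)]
  have hγ₁le1 : γ₁ ≤ 1 := by
    by_contra hcon
    push_neg at hcon
    have hsing : ∀ y : ι, f {y} = 0 := by
      intro y
      have h0 := hγ₁.1 ({y} : Finset ι) 0 (Nat.zero_le _)
      rw [hY0] at h0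
      simp [hfempty] at h0
      nlinarith [hfnonneg ({y} : Finset ι)]
    have hzero : ∀ A : Finset ι, f A = 0 := by
      intro A
      have h0 := hγ₁.1 A 0 (Nat.zero_le _)
      rw [hY0] at h0
      simp [hfempty, hsing] at h0
      nlinarith [hfnonneg A]
    have hmem : γ₁ + 1 ∈ {g : ℝ | ∀ A : Finset ι, ∀ t ≤ n,
        g * (f (A ∪ Y t) - f (Y t)) ≤
          ∑ y ∈ A \ Y t, (f (insert y (Y t)) - f (Y t))} := by
      intro A t htn
      simp [hzero]
    have := hγ₁.2 hmem
    linarith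
  -- algorithm invariants
  have hYmonostep : ∀ t < n, Y t ⊆ Y (t + 1) := by
    intro t ht
    obtain ⟨ys, _, _, _, hadd, hrej⟩ := hstep t ht
    by_cases hb : c ys + ∑ z ∈ Y t, c z ≤ B
    · rw [hadd hb]; exact subset_insert _ _
    · rw [hrej hb]
  have hYmono' : ∀ t ≤ n, ∀ s ≤ t, Y s ⊆ Y t := by
    intro t
    induction t with
    | zero => intro _ s hs; rw [Nat.le_zero.mp hs]
    | succ t ih =>
      intro ht s hs
      rcases eq_or_lt_of_le hs with rfl | h
      · exact subset_rfl
      · exact (ih (le_trans (Nat.le_succ t) ht) s (Nat.lt_succ_iff.mp h)).trans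
          (hYmonostep t (lt_of_lt_of_le (Nat.lt_succ_self t) ht))
  have hdisj : ∀ t ≤ n, ∀ y ∈ C t, y ∉ Y t := by
    intro t
    induction t with
    | zero => intro _ y _; simp [hY0]
    | succ t ih =>
      intro ht y hyC
      have htn : t < n := lt_of_lt_of_le (Nat.lt_succ_self t) ht
      obtain ⟨ys, hysC, _, hCe, hadd, hrej⟩ := hstep t htn
      rw [hCe] at hyC
      have hyne : y ≠ ys := Finset.ne_of_mem_erase hyC
      have hyC' : y ∈ C t := Finset.mem_of_mem_erase hyC
      have hyY : y ∉ Y t := ih htn.le y hyC'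
      by_cases hb : c ys + ∑ z ∈ Y t, c z ≤ B
      · rw [hadd hb]
        simp [hyne, hyY]
      · rw [hrej hb]; exact hyY
  have hcard : ∀ t ≤ n, (C t).card = n - t := by
    intro t
    induction t with
    | zero => intro _; rw [hC0]; simp [hn]
    | succ t ih =>
      intro ht
      have htn : t < n := lt_of_lt_of_le (Nat.lt_succ_self t) ht
      obtain ⟨ys, hysC, _, hCe, _, _⟩ := hstep t htn
      rw [hCe, Finset.card_erase_of_mem hysC, ih htn.le]
      omega
  have hCn : C n = ∅ := Finset.card_eq_zero.mp (by rw [hcard n le_rfl]; omega)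
  have hbudget : ∀ t ≤ n, ∑ z ∈ Y t, c z ≤ B := by
    intro t
    induction t with
    | zero => intro _; rw [hY0]; simp [hB.le]
    | succ t ih =>
      intro ht
      have htn : t < n := lt_of_lt_of_le (Nat.lt_succ_self t) ht
      obtain ⟨ys, hysC, _, _, hadd, hrej⟩ := hstep t htn
      by_cases hb : c ys + ∑ z ∈ Y t, c z ≤ B
      · rw [hadd hb, Finset.sum_insert (hdisj t htn.le ys hysC)]
        exact hb
      · rw [hrej hb]; exact ih htn.le
  -- coefficient is at most 1 (used in the easy case)
  have hexp0 : 0 ≤ 1 - Real.exp (-γ₁) := by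
    have : Real.exp (-γ₁) ≤ 1 := Real.exp_le_one_iff.mpr (neg_nonpos.mpr hγ₁0)
    linarith
  have hmin0 : 0 ≤ min γ₂ 1 := le_min hγ₂0 zero_le_one
  have hmin1 : min γ₂ 1 ≤ 1 := min_le_right _ _
  have hcoef : min γ₂ 1 / 2 * (1 - Real.exp (-γ₁)) * f Ystar ≤ f Ystar := by
    have h1 : 1 - Real.exp (-γ₁) ≤ 1 := by linarith [Real.exp_pos (-γ₁)]
    have h2 : min γ₂ 1 / 2 * (1 - Real.exp (-γ₁)) ≤ 1 := by nlinarith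
    have h3 : 0 ≤ min γ₂ 1 / 2 * (1 - Real.exp (-γ₁)) := by positivity
    nlinarith
  have hYglow : ∀ Z : Finset ι, fhat Z ≤ fhat Yg → f Z - ε ≤ f Yg := by
    intro Z hZ
    have h1 := hup Yg
    have h2 := hlow Z
    linarith
  by_cases hss : Ystar ⊆ Y n
  · -- Case 1: every element of Ystar was added
    have h1 : f Ystar ≤ f (Y n) := hmono _ _ hss
    have h2 : f (Y n) - ε ≤ f Yg := hYglow (Y n) (by rw [hYgmax]; exact le_max_right _ _)
    have hKe : ε ≤ ((B + cmax) / cmin + 1) * ε := by nlinarith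
    linarith
  · -- Case 2: some element of Ystar was rejected
    obtain ⟨ystar0, hys0, hys0n⟩ := Finset.not_subset.mp hss
    -- find the first rejection of an element of Ystar
    have hex : ∃ t, t < n ∧ ∃ ys, ys ∈ C t ∧ ys ∈ Ystar ∧
        (∀ y ∈ C t, (fhat (insert y (Y t)) - fhat (Y t)) / c y ≤
          (fhat (insert ys (Y t)) - fhat (Y t)) / c ys) ∧
        ¬ (c ys + ∑ z ∈ Y t, c z ≤ B) ∧ Y (t + 1) = Y t := by
      have hfind : ∃ t, t < n ∧ ystar0 ∈ C t ∧ ystar0 ∉ C (t + 1) := by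
        have haux : ∀ t ≤ n, ystar0 ∈ C t ∨ ∃ s, s < n ∧ ystar0 ∈ C s ∧ ystar0 ∉ C (s + 1) := by
          intro t
          induction t with
          | zero => intro _; left; rw [hC0]; exact mem_univ _
          | succ t ih =>
            intro ht
            rcases ih (le_trans (Nat.le_succ t) ht) with h | h
            · by_cases h2 : ystar0 ∈ C (t + 1)
              · exact Or.inl h2
              · exact Or.inr ⟨t, lt_of_lt_of_le (Nat.lt_succ_self t) ht, h, h2⟩
            · exact Or.inr h
        rcases haux n le_rfl with h | h
        · rw [hCn] at h; exact absurd h (Finset.notMem_empty _)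
        · exact h
      obtain ⟨t, htn, hmem, hnotmem⟩ := hfind
      obtain ⟨ys, hysC, hmax, hCe, hadd, hrej⟩ := hstep t htn
      have heq : ystar0 = ys := by
        by_contra hne
        exact hnotmem (hCe ▸ Finset.mem_erase.mpr ⟨hne, hmem⟩)
      subst heq
      by_cases hb : c ystar0 + ∑ z ∈ Y t, c z ≤ B
      · exfalso
        have : ystar0 ∈ Y (t + 1) := by rw [hadd hb]; exact mem_insert_self _ _
        exact hys0n (hYmono' n le_rfl (t + 1) htn this)
      · exact ⟨t, htn, ystar0, hmem, hys0, hmax, hb, hrej hb⟩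
    set τ := Nat.find hex with hτdef
    obtain ⟨hτn, yr, hyrC, hyrYs, hmaxτ, hbτ, hYτeq⟩ := Nat.find_spec hex
    have hτmin : ∀ t < τ, ¬ (t < n ∧ ∃ ys, ys ∈ C t ∧ ys ∈ Ystar ∧
        (∀ y ∈ C t, (fhat (insert y (Y t)) - fhat (Y t)) / c y ≤
          (fhat (insert ys (Y t)) - fhat (Y t)) / c ys) ∧
        ¬ (c ys + ∑ z ∈ Y t, c z ≤ B) ∧ Y (t + 1) = Y t) := fun t ht => Nat.find_min hex ht
    have hyrY : yr ∉ Y τ := hdisj τ hτn.le yr hyrC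
    -- invariant: before time τ, no element of Ystar has been discarded
    have hinv : ∀ t ≤ τ, Ystar \ Y t ⊆ C t := by
      intro t
      induction t with
      | zero => intro _ y _; rw [hC0]; exact mem_univ _
      | succ t ih =>
        intro ht
        have htτ : t < τ := lt_of_lt_of_le (Nat.lt_succ_self t) ht
        have htn : t < n := lt_trans htτ hτn
        obtain ⟨ys, hysC, hmax, hCe, hadd, hrej⟩ := hstep t htn
        intro y hy
        have hyYs := (Finset.mem_sdiff.mp hy).1
        have hynY := (Finset.mem_sdiff.mp hy).2
        rw [hCe]
        by_cases hb : c ys + ∑ z ∈ Y t, c z ≤ B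
        · rw [hadd hb] at hynY
          have hyne : y ≠ ys := fun h => hynY (h ▸ mem_insert_self _ _)
          have hynYt : y ∉ Y t := fun h => hynY (mem_insert_of_mem h)
          exact Finset.mem_erase.mpr ⟨hyne, ih htτ.le (Finset.mem_sdiff.mpr ⟨hyYs, hynYt⟩)⟩
        · have hysnYs : ys ∉ Ystar := by
            intro hysYs
            exact hτmin t htτ ⟨htn, ys, hysC, hysYs, hmax, hb, hrej hb⟩
          rw [hrej hb] at hynY
          have hyne : y ≠ ys := fun h => hysnYs (h ▸ hyYs)
          exact Finset.mem_erase.mpr ⟨hyne, ih htτ.le (Finset.mem_sdiff.mpr ⟨hyYs, hynY⟩)⟩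
    -- the key per-step inequality
    have hkey : ∀ t ≤ τ, ∀ s : ι, s ∈ C t →
        (∀ y ∈ C t, (fhat (insert y (Y t)) - fhat (Y t)) / c y ≤
          (fhat (insert s (Y t)) - fhat (Y t)) / c s) →
        f Ystar - f (insert s (Y t)) ≤
          (1 - γ₁ * c s / B) * (f Ystar - f (Y t)) + ε + c s / cmin * ε := by
      intro t ht s hsC hmax
      have htn : t ≤ n := le_trans ht hτn.le
      set X := Y t with hX
      set r := (fhat (insert s X) - fhat X) / c s with hr
      have hyrX : yr ∈ Ystar \ X := Finset.mem_sdiff.mpr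
        ⟨hyrYs, fun h => hyrY (hYmono' τ hτn.le t ht h)⟩
      have hmarg : ∀ y ∈ Ystar \ X, f (insert y X) - f X ≤ c y * r + ε := by
        intro y hy
        have hyC := hinv t ht hy
        have h1 := hmax y hyC
        have h2 : fhat (insert y X) - fhat X ≤ c y * r := by
          have h3 := (div_le_iff₀ (hc y)).mp h1
          linarith [h3]
        have h3 := hlow (insert y X)
        have h4 := hup X
        linarith
      have hsum : γ₁ * (f Ystar - f X) ≤
          (∑ y ∈ Ystar \ X, c y) * r + ((Ystar \ X).card : ℝ) * ε := by
        have h0 := hγ₁.1 Ystar t htn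
        have h1 : f Ystar ≤ f (Ystar ∪ X) := hmono _ _ Finset.subset_union_left
        have h2 : γ₁ * (f Ystar - f X) ≤ γ₁ * (f (Ystar ∪ X) - f X) :=
          mul_le_mul_of_nonneg_left (by linarith) hγ₁0
        have h3 : ∑ y ∈ Ystar \ X, (f (insert y X) - f X) ≤
            ∑ y ∈ Ystar \ X, (c y * r + ε) := Finset.sum_le_sum hmarg
        have h4 : ∑ y ∈ Ystar \ X, (c y * r + ε) =
            (∑ y ∈ Ystar \ X, c y) * r + ((Ystar \ X).card : ℝ) * ε := by
          rw [Finset.sum_add_distrib, ← Finset.sum_mul, Finset.sum_const, nsmul_eq_mul]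
        linarith
      have hrlow : -(ε / cmin) ≤ r := by
        have h1 := hmax yr (hinv t ht hyrX)
        have h2 : 0 ≤ f (insert yr X) - f X := sub_nonneg.mpr (hmono _ _ (subset_insert _ _))
        have h3 : -ε ≤ fhat (insert yr X) - fhat X := by
          linarith [hlow (insert yr X), hup X]
        have h4 : -(ε / cmin) * c yr ≤ -ε := by
          have h5 : ε ≤ ε / cmin * c yr := by
            rw [div_mul_eq_mul_div, le_div_iff₀ hcmin_pos]
            exact mul_le_mul_of_nonneg_left (hcmin_le yr) hε
          linarith
        have h7 : -(ε / cmin) ≤ (fhat (insert yr X) - fhat X) / c yr := by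
          rw [le_div_iff₀ (hc yr)]
          linarith
        exact le_trans h7 h1
      have hcS_le : ∑ y ∈ Ystar \ X, c y ≤ B :=
        le_trans (Finset.sum_le_sum_of_subset_of_nonneg Finset.sdiff_subset
          (fun y _ _ => (hc y).le)) hfeas
      have hcard_le : ((Ystar \ X).card : ℝ) * cmin ≤ ∑ y ∈ Ystar \ X, c y := by
        have := Finset.card_nsmul_le_sum (Ystar \ X) c cmin (fun y _ => hcmin_le y)
        simpa [nsmul_eq_mul] using this
      have hmain : γ₁ * (f Ystar - f X) ≤ B * r + B / cmin * ε := by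
        set cS := ∑ y ∈ Ystar \ X, c y with hcS
        have hS0 : (0:ℝ) ≤ cS := Finset.sum_nonneg fun y _ => (hc y).le
        have h2 : (B - cS) * (-(ε / cmin)) ≤ (B - cS) * r :=
          mul_le_mul_of_nonneg_left hrlow (by linarith)
        have h3 : (B - cS) * r = B * r - cS * r := by ring
        have h4 : (B - cS) * (-(ε / cmin)) = -((B - cS) / cmin * ε) := by ring
        have h5 : ((Ystar \ X).card : ℝ) * ε ≤ cS / cmin * ε := by
          have h6 : ((Ystar \ X).card : ℝ) ≤ cS / cmin := (le_div_iff₀ hcmin_pos).mpr hcard_le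
          exact mul_le_mul_of_nonneg_right h6 hε
        have h7 : (B - cS) / cmin * ε + cS / cmin * ε = B / cmin * ε := by ring
        linarith
      have hΔ : fhat (insert s X) - fhat X ≤ (f (insert s X) - f X) + ε := by
        linarith [hup (insert s X), hlow X]
      have hBr : B * r ≤ B / c s * (f (insert s X) - f X + ε) := by
        have hb1 : B * r = B / c s * (fhat (insert s X) - fhat X) := by
          rw [hr]; ring
        have hb2 : B / c s * (fhat (insert s X) - fhat X) ≤
            B / c s * (f (insert s X) - f X + ε) :=
          mul_le_mul_of_nonneg_left hΔ (div_nonneg hB.le (hc s).le)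
        linarith
      have hstep2 : γ₁ * (f Ystar - f X) ≤
          B / c s * (f (insert s X) - f X + ε) + B / cmin * ε := by linarith
      have hfinal : γ₁ * c s / B * (f Ystar - f X) ≤
          (f (insert s X) - f X) + ε + c s / cmin * ε := by
        have hpos : (0:ℝ) ≤ c s / B := (div_pos (hc s) hB).le
        have h1 := mul_le_mul_of_nonneg_left hstep2 hpos
        calc γ₁ * c s / B * (f Ystar - f X)
            = c s / B * (γ₁ * (f Ystar - f X)) := by ring
          _ ≤ c s / B * (B / c s * (f (insert s X) - f X + ε) + B / cmin * ε) := h1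
          _ = c s / B * (B / c s) * (f (insert s X) - f X + ε) +
              c s / B * (B / cmin) * ε := by ring
          _ = (f (insert s X) - f X) + ε + c s / cmin * ε := by
              rw [div_mul_div_comm, mul_comm (c s) B, div_self (mul_ne_zero (ne_of_gt hB) (ne_of_gt (hc s))),
                div_mul_div_comm, mul_comm (c s) B, mul_div_mul_left _ _ (ne_of_gt hB)]
              ring
      have hgoal : (1 - γ₁ * c s / B) * (f Ystar - f X) =
          (f Ystar - f X) - γ₁ * c s / B * (f Ystar - f X) := by ring
      linarith
    -- combining one step with the exponential invariant
    have hcombine : ∀ (X : Finset ι) (s : ι), s ∉ X →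
        f Ystar - f X ≤ Real.exp (-(γ₁ * (∑ z ∈ X, c z) / B)) * f Ystar +
          2 * ((∑ z ∈ X, c z) / cmin) * ε →
        f Ystar - f (insert s X) ≤ (1 - γ₁ * c s / B) * (f Ystar - f X) + ε + c s / cmin * ε →
        f Ystar - f (insert s X) ≤
          Real.exp (-(γ₁ * (∑ z ∈ insert s X, c z) / B)) * f Ystar +
            2 * ((∑ z ∈ insert s X, c z) / cmin) * ε := by
      intro X s hsX iht hk
      rw [Finset.sum_insert hsX]
      set cX := ∑ z ∈ X, c z with hcX
      have hcX0 : (0:ℝ) ≤ cX := Finset.sum_nonneg fun y _ => (hc y).le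
      set E := Real.exp (-(γ₁ * cX / B)) with hE
      set a := γ₁ * c s / B with ha
      have ha0 : 0 ≤ a := div_nonneg (mul_nonneg hγ₁0 (hc s).le) hB.le
      have ha1 : a ≤ 1 := by
        rw [ha, div_le_one hB]
        nlinarith [hc s, hcB s]
      have hexp1 : 1 - a ≤ Real.exp (-a) := by
        linarith [Real.add_one_le_exp (-a)]
      have hE0 : 0 < E := Real.exp_pos _
      have p1 : (1 - a) * (f Ystar - f X) ≤ (1 - a) * (E * f Ystar + 2 * (cX / cmin) * ε) :=
        mul_le_mul_of_nonneg_left iht (by linarith)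
      have p2 : (1 - a) * (E * f Ystar + 2 * (cX / cmin) * ε) =
          (1 - a) * E * f Ystar + (1 - a) * (2 * (cX / cmin) * ε) := by ring
      have p3 : (1 - a) * E * f Ystar ≤ Real.exp (-a) * E * f Ystar :=
        mul_le_mul_of_nonneg_right (mul_le_mul_of_nonneg_right hexp1 hE0.le) hfstar0
      have herr0 : 0 ≤ 2 * (cX / cmin) * ε :=
        mul_nonneg (mul_nonneg (by norm_num) (div_nonneg hcX0 hcmin_pos.le)) hε
      have p4 : (1 - a) * (2 * (cX / cmin) * ε) ≤ 2 * (cX / cmin) * ε := by nlinarith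
      have p5 : Real.exp (-a) * E * f Ystar =
          Real.exp (-(γ₁ * (c s + cX) / B)) * f Ystar := by
        rw [hE, ha, ← Real.exp_add]
        congr 2
        ring
      have p6 : ε ≤ c s / cmin * ε := by
        have h1 : (1:ℝ) ≤ c s / cmin := (one_le_div hcmin_pos).mpr (hcmin_le s)
        nlinarith
      have p7 : 2 * (cX / cmin) * ε + 2 * (c s / cmin) * ε =
          2 * ((c s + cX) / cmin) * ε := by ring
      linarith
    -- the exponential recursion
    have hrec : ∀ t ≤ τ, f Ystar - f (Y t) ≤
        Real.exp (-(γ₁ * (∑ z ∈ Y t, c z) / B)) * f Ystar +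
          2 * ((∑ z ∈ Y t, c z) / cmin) * ε := by
      intro t
      induction t with
      | zero =>
        intro _
        rw [hY0]
        simp [hfempty]
      | succ t ih =>
        intro ht
        have htτ : t < τ := lt_of_lt_of_le (Nat.lt_succ_self t) ht
        have htn : t < n := lt_trans htτ hτn
        have iht := ih htτ.le
        obtain ⟨ys, hysC, hmax, hCe, hadd, hrej⟩ := hstep t htn
        by_cases hb : c ys + ∑ z ∈ Y t, c z ≤ B
        · rw [hadd hb]
          exact hcombine (Y t) ys (hdisj t htn.le ys hysC) iht
            (hkey t htτ.le ys hysC hmax)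
        · rw [hrej hb]
          exact iht
    -- the virtual step at time τ
    have hvirt : f Ystar - f (insert yr (Y τ)) ≤
        Real.exp (-γ₁) * f Ystar + 2 * ((B + cmax) / cmin) * ε := by
      have h0 := hcombine (Y τ) yr hyrY (hrec τ le_rfl) (hkey τ le_rfl yr hyrC hmaxτ)
      rw [Finset.sum_insert hyrY] at h0
      set cX := ∑ z ∈ Y τ, c z with hcX
      have hbτ' : B < c yr + cX := not_le.mp hbτ
      have h8 : Real.exp (-(γ₁ * (c yr + cX) / B)) ≤ Real.exp (-γ₁) := by
        apply Real.exp_le_exp.mpr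
        rw [neg_le_neg_iff, le_div_iff₀ hB]
        nlinarith
      have h9 : Real.exp (-(γ₁ * (c yr + cX) / B)) * f Ystar ≤ Real.exp (-γ₁) * f Ystar :=
        mul_le_mul_of_nonneg_right h8 hfstar0
      have h10 : (c yr + cX) / cmin ≤ (B + cmax) / cmin := by
        apply (div_le_div_iff_of_pos_right hcmin_pos).mpr
        linarith [hle_cmax yr, hbudget τ hτn.le]
      have h11 : 2 * ((c yr + cX) / cmin) * ε ≤ 2 * ((B + cmax) / cmin) * ε :=
        mul_le_mul_of_nonneg_right
          (mul_le_mul_of_nonneg_left h10 (by norm_num : (0:ℝ) ≤ 2)) hε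
      linarith
    -- the type-2 ratio step
    have hγ₂app := hγ₂.1 τ hτn.le yr hyrY (not_le.mp hbτ)
    have hm : 0 ≤ f (insert yr (Y τ)) - f (Y τ) :=
      sub_nonneg.mpr (hmono _ _ (subset_insert _ _))
    have hr1 : (1 - Real.exp (-γ₁)) * f Ystar =
        f Ystar - Real.exp (-γ₁) * f Ystar := by ring
    have hhalf : min γ₂ 1 * ((1 - Real.exp (-γ₁)) * f Ystar) -
        2 * ((B + cmax) / cmin) * ε ≤ f {y₁} + f (Y τ) := by
      rw [hfempty, sub_zero] at hγ₂app
      rcases le_total 1 γ₂ with h | h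
      · rw [min_eq_right h]
        have h1 : f (insert yr (Y τ)) - f (Y τ) ≤
            γ₂ * (f (insert yr (Y τ)) - f (Y τ)) := le_mul_of_one_le_left hm h
        linarith [hvirt, h1, hγ₂app, hr1]
      · rw [min_eq_left h]
        have q1 : γ₂ * ((1 - Real.exp (-γ₁)) * f Ystar - 2 * ((B + cmax) / cmin) * ε) ≤
            γ₂ * f (insert yr (Y τ)) := by
          apply mul_le_mul_of_nonneg_left ?_ hγ₂0
          linarith [hvirt]
        have q2 : γ₂ * f (Y τ) ≤ f (Y τ) := by nlinarith [hfnonneg (Y τ)]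
        have hKe0 : 0 ≤ 2 * ((B + cmax) / cmin) * ε :=
          mul_nonneg (mul_nonneg (by norm_num) hK0) hε
        have q3 : γ₂ * (2 * ((B + cmax) / cmin) * ε) ≤ 2 * ((B + cmax) / cmin) * ε := by
          nlinarith
        have q4 : γ₂ * (f (insert yr (Y τ)) - f (Y τ)) =
            γ₂ * f (insert yr (Y τ)) - γ₂ * f (Y τ) := by ring
        have q5 : γ₂ * ((1 - Real.exp (-γ₁)) * f Ystar - 2 * ((B + cmax) / cmin) * ε) =
            γ₂ * ((1 - Real.exp (-γ₁)) * f Ystar) - γ₂ * (2 * ((B + cmax) / cmin) * ε) := by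
          ring
        linarith [q1, q2, q3, hγ₂app, q4, q5]
    have hfn : f (Y τ) ≤ f (Y n) := hmono _ _ (hYmono' n le_rfl τ hτn.le)
    have hfinal2 : (f {y₁} + f (Y n)) / 2 - ε ≤ f Yg := by
      have h1 := hup Yg
      have h2 : fhat {y₁} ≤ fhat Yg := by rw [hYgmax]; exact le_max_left _ _
      have h3 : fhat (Y n) ≤ fhat Yg := by rw [hYgmax]; exact le_max_right _ _
      have h4 := hlow ({y₁} : Finset ι)
      have h5 := hlow (Y n)
      linarith
    have hrng : min γ₂ 1 / 2 * (1 - Real.exp (-γ₁)) * f Ystar =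
        (min γ₂ 1 * ((1 - Real.exp (-γ₁)) * f Ystar)) / 2 := by ring
    have hrng2 : ((B + cmax) / cmin + 1) * ε = (B + cmax) / cmin * ε + ε := by ring
    have hrng3 : 2 * ((B + cmax) / cmin) * ε = 2 * ((B + cmax) / cmin * ε) := by ring
    linarith [hfinal2, hhalf, hfn, hrng, hrng2, hrng3]
end

section
/- Let M̄ be a finite set, F_p a 2×2 real symmetric positive definite matrix, and for each y ∈ M̄ let H_y be a 2×2 real symmetric positive semidefinite matrix; write H(Y) = ∑_{y∈Y} H_y and f_Pa(Y) = Tr(F_p⁻¹) − Tr((F_p + H(Y))⁻¹) for Y ⊆ M̄. Let Y ⊊ M̄ and let z ∈ argmin_{y ∈ M̄\Y} λ₂(F_p + H({y} ∪ Y)) / λ₁(F_p + H({y} ∪ Y)). Then for every A ⊆ M̄, ∑_{y ∈ A\Y} ( f_Pa({y} ∪ Y) − f_Pa(Y) ) ≥ [ λ₂(F_p + H(Y)) λ₂(F_p + H({z} ∪ Y)) / ( λ₁(F_p + H(Y)) λ₁(F_p + H({z} ∪ Y)) ) ] · ( f_Pa(A ∪ Y) − f_Pa(Y) ). -/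
open Matrix

/-- The largest eigenvalue `λ₁(P)` of a real symmetric `2 × 2` matrix `P`
(for a symmetric matrix `Tr(P)² − 4 det(P) ≥ 0` and the eigenvalues are
`(Tr(P) ± √(Tr(P)² − 4 det P))/2`). -/
noncomputable def eig1 (P : Matrix (Fin 2) (Fin 2) ℝ) : ℝ :=
  (P.trace + Real.sqrt (P.trace ^ 2 - 4 * P.det)) / 2

/-- The smallest eigenvalue `λ₂(P)` of a real symmetric `2 × 2` matrix `P`. -/
noncomputable def eig2 (P : Matrix (Fin 2) (Fin 2) ℝ) : ℝ :=
  (P.trace - Real.sqrt (P.trace ^ 2 - 4 * P.det)) / 2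

/-- The objective `f_Pa(Y) = Tr(F_p⁻¹) − Tr((F_p + ∑_{y∈Y} H_y)⁻¹)` of Eq. (28). -/
noncomputable def fPa {ι : Type*} [DecidableEq ι] (Fp : Matrix (Fin 2) (Fin 2) ℝ)
    (H : ι → Matrix (Fin 2) (Fin 2) ℝ) (Y : Finset ι) : ℝ :=
  (Fp⁻¹).trace - ((Fp + ∑ y ∈ Y, H y)⁻¹).trace

namespace FPaAux

variable {M P Q : Matrix (Fin 2) (Fin 2) ℝ}

lemma herm_entry (h : M.IsHermitian) : M 1 0 = M 0 1 := by
  have := congr_fun (congr_fun h 0) 1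
  simpa [Matrix.conjTranspose_apply] using this

lemma disc_nonneg (h : M.IsHermitian) : 0 ≤ M.trace ^ 2 - 4 * M.det := by
  rw [Matrix.trace_fin_two, Matrix.det_fin_two, herm_entry h]
  nlinarith [sq_nonneg (M 0 0 - M 1 1), sq_nonneg (M 0 1)]

lemma eig_sum : eig1 M + eig2 M = M.trace := by unfold eig1 eig2; ring

lemma eig_prod (h : M.IsHermitian) : eig1 M * eig2 M = M.det := by
  have h2 : Real.sqrt (M.trace ^ 2 - 4 * M.det) ^ 2 = M.trace ^ 2 - 4 * M.det :=
    Real.sq_sqrt (disc_nonneg h)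
  unfold eig1 eig2
  linear_combination (-1/4 : ℝ) * h2

lemma eig2_le_eig1 : eig2 M ≤ eig1 M := by
  have := Real.sqrt_nonneg (M.trace ^ 2 - 4 * M.det)
  unfold eig1 eig2; linarith

lemma psd_trace_nonneg (h : M.PosSemidef) : 0 ≤ M.trace := by
  have h0 : (0:ℝ) ≤ M 0 0 := by
    simpa [Matrix.mulVec, dotProduct, Fin.sum_univ_two] using h.dotProduct_mulVec_nonneg ![1,0]
  have h1 : (0:ℝ) ≤ M 1 1 := by
    simpa [Matrix.mulVec, dotProduct, Fin.sum_univ_two] using h.dotProduct_mulVec_nonneg ![0,1]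
  rw [Matrix.trace_fin_two]; linarith

lemma psd_det_nonneg (h : M.PosSemidef) : 0 ≤ M.det := by
  rw [h.isHermitian.det_eq_prod_eigenvalues]
  exact Finset.prod_nonneg fun i _ => h.eigenvalues_nonneg i

lemma psd_of (h : M.IsHermitian) (htr : 0 ≤ M.trace) (hdet : 0 ≤ M.det) : M.PosSemidef := by
  refine .of_dotProduct_mulVec_nonneg h fun x => ?_
  have hb := herm_entry h
  have htr' : 0 ≤ M 0 0 + M 1 1 := by rwa [Matrix.trace_fin_two] at htr
  have hdet' : 0 ≤ M 0 0 * M 1 1 - M 0 1 * M 0 1 := by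
    rw [Matrix.det_fin_two, hb] at hdet; linarith
  have ha : 0 ≤ M 0 0 := by nlinarith [sq_nonneg (M 0 1)]
  have key : dotProduct (star x) (M *ᵥ x)
      = M 0 0 * (x 0)^2 + 2 * M 0 1 * x 0 * x 1 + M 1 1 * (x 1)^2 := by
    simp [Matrix.mulVec, dotProduct, Fin.sum_univ_two, hb]; ring
  rw [key]
  rcases eq_or_lt_of_le ha with ha0 | ha0
  · have hb0 : M 0 1 = 0 := by nlinarith [sq_nonneg (M 0 1)]
    have hd : 0 ≤ M 1 1 := by nlinarith
    rw [← ha0, hb0]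
    nlinarith [sq_nonneg (x 1)]
  · nlinarith [sq_nonneg (M 0 0 * x 0 + M 0 1 * x 1), mul_nonneg hdet' (sq_nonneg (x 1))]

lemma herm_sub_smul_one (h : M.IsHermitian) (t : ℝ) : (M - t • 1).IsHermitian := by
  rw [Matrix.IsHermitian, Matrix.conjTranspose_sub, Matrix.conjTranspose_smul,
    Matrix.conjTranspose_one, h, star_trivial]

lemma herm_smul_one_sub (h : M.IsHermitian) (t : ℝ) : (t • 1 - M).IsHermitian := by
  rw [Matrix.IsHermitian, Matrix.conjTranspose_sub, Matrix.conjTranspose_smul,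
    Matrix.conjTranspose_one, h, star_trivial]

lemma trace_sub_smul_one (t : ℝ) : (M - t • (1 : Matrix (Fin 2) (Fin 2) ℝ)).trace = M.trace - 2 * t := by
  rw [Matrix.trace_sub, Matrix.trace_smul, Matrix.trace_one]
  simp [smul_eq_mul]; ring

lemma trace_smul_one_sub (t : ℝ) : (t • (1 : Matrix (Fin 2) (Fin 2) ℝ) - M).trace = 2 * t - M.trace := by
  rw [Matrix.trace_sub, Matrix.trace_smul, Matrix.trace_one]
  simp [smul_eq_mul]; ring

lemma det_sub_smul_one (t : ℝ) :
    (M - t • (1 : Matrix (Fin 2) (Fin 2) ℝ)).det = M.det - t * M.trace + t ^ 2 := by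
  simp [Matrix.det_fin_two, Matrix.trace_fin_two, Matrix.sub_apply, Matrix.smul_apply,
    Matrix.one_apply, Matrix.det_fin_two]
  ring

lemma det_smul_one_sub (t : ℝ) :
    (t • (1 : Matrix (Fin 2) (Fin 2) ℝ) - M).det = M.det - t * M.trace + t ^ 2 := by
  simp [Matrix.det_fin_two, Matrix.trace_fin_two, Matrix.sub_apply, Matrix.smul_apply,
    Matrix.one_apply, Matrix.det_fin_two]
  ring

lemma le_eig2_of_psd (h : M.IsHermitian) {t : ℝ} (hpsd : (M - t • 1).PosSemidef) :
    t ≤ eig2 M := by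
  have h1 := psd_trace_nonneg hpsd
  have h2 := psd_det_nonneg hpsd
  rw [trace_sub_smul_one] at h1
  rw [det_sub_smul_one] at h2
  have hsum := eig_sum (M := M)
  have hprod := eig_prod h
  have hle := eig2_le_eig1 (M := M)
  by_contra hc
  push_neg at hc
  have he1 : t < eig1 M := by linarith
  have hneg : (t - eig1 M) * (t - eig2 M) < 0 :=
    mul_neg_of_neg_of_pos (by linarith) (by linarith)
  have hexp : M.det - t * M.trace + t ^ 2 = (t - eig1 M) * (t - eig2 M) := by
    rw [← hsum, ← hprod]; ring
  linarith [h2, hneg, hexp]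

lemma eig1_le_of_psd (h : M.IsHermitian) {t : ℝ} (hpsd : (t • 1 - M).PosSemidef) :
    eig1 M ≤ t := by
  have h1 := psd_trace_nonneg hpsd
  have h2 := psd_det_nonneg hpsd
  rw [trace_smul_one_sub] at h1
  rw [det_smul_one_sub] at h2
  have hsum := eig_sum (M := M)
  have hprod := eig_prod h
  have hle := eig2_le_eig1 (M := M)
  by_contra hc
  push_neg at hc
  have he2 : eig2 M < t := by linarith
  have hneg : (t - eig1 M) * (t - eig2 M) < 0 :=
    mul_neg_of_neg_of_pos (by linarith) (by linarith)
  have hexp : M.det - t * M.trace + t ^ 2 = (t - eig1 M) * (t - eig2 M) := by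
    rw [← hsum, ← hprod]; ring
  linarith [h2, hneg, hexp]

lemma psd_sub_eig2 (h : M.IsHermitian) : (M - eig2 M • 1).PosSemidef := by
  apply psd_of (herm_sub_smul_one h _)
  · rw [trace_sub_smul_one]
    have : 2 * eig2 M = M.trace - Real.sqrt (M.trace ^ 2 - 4 * M.det) := by unfold eig2; ring
    rw [this]
    have := Real.sqrt_nonneg (M.trace ^ 2 - 4 * M.det)
    linarith
  · rw [det_sub_smul_one]
    have hz : M.det - eig2 M * M.trace + eig2 M ^ 2 = 0 := by
      rw [← eig_sum (M := M), ← eig_prod h]; ring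
    linarith

lemma psd_eig1_sub (h : M.IsHermitian) : (eig1 M • 1 - M).PosSemidef := by
  apply psd_of (herm_smul_one_sub h _)
  · rw [trace_smul_one_sub]
    have : 2 * eig1 M = M.trace + Real.sqrt (M.trace ^ 2 - 4 * M.det) := by unfold eig1; ring
    rw [this]
    have := Real.sqrt_nonneg (M.trace ^ 2 - 4 * M.det)
    linarith
  · rw [det_smul_one_sub]
    have hz : M.det - eig1 M * M.trace + eig1 M ^ 2 = 0 := by
      rw [← eig_sum (M := M), ← eig_prod h]; ring
    linarith

lemma eig2_mono (hP : P.IsHermitian) (hQ : Q.IsHermitian) (hle : (Q - P).PosSemidef) :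
    eig2 P ≤ eig2 Q := by
  apply le_eig2_of_psd hQ
  have : Q - eig2 P • 1 = (Q - P) + (P - eig2 P • 1) := by abel
  rw [this]
  exact hle.add (psd_sub_eig2 hP)

lemma eig1_mono (hP : P.IsHermitian) (hQ : Q.IsHermitian) (hle : (Q - P).PosSemidef) :
    eig1 P ≤ eig1 Q := by
  apply eig1_le_of_psd hP
  have : eig1 Q • 1 - P = (eig1 Q • 1 - Q) + (Q - P) := by abel
  rw [this]
  exact (psd_eig1_sub hQ).add hle

lemma posdef_trace_pos (h : M.PosDef) : 0 < M.trace := by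
  have hx : (![1,0] : Fin 2 → ℝ) ≠ 0 := by
    intro hc; have := congr_fun hc 0; simp at this
  have h0 : (0:ℝ) < M 0 0 := by
    simpa [Matrix.mulVec, dotProduct, Fin.sum_univ_two] using h.dotProduct_mulVec_pos hx
  have h1 : (0:ℝ) ≤ M 1 1 := by
    simpa [Matrix.mulVec, dotProduct, Fin.sum_univ_two] using h.posSemidef.dotProduct_mulVec_nonneg ![0,1]
  rw [Matrix.trace_fin_two]; linarith

lemma eig2_pos (h : M.PosDef) : 0 < eig2 M := by
  have htr := posdef_trace_pos h
  have hdet := h.det_pos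
  have hs : Real.sqrt (M.trace ^ 2 - 4 * M.det) < M.trace := by
    rw [Real.sqrt_lt' htr]; linarith
  unfold eig2; linarith

lemma eig1_pos (h : M.PosDef) : 0 < eig1 M := lt_of_lt_of_le (eig2_pos h) eig2_le_eig1

lemma trace_inv_eq (hdet : M.det ≠ 0) : (M⁻¹).trace = M.trace / M.det := by
  rw [Matrix.inv_def, Ring.inverse_eq_inv', Matrix.trace_smul, Matrix.adjugate_fin_two,
    Matrix.trace_fin_two_of, Matrix.trace_fin_two]
  field_simp
  rw [smul_eq_mul, ← mul_assoc, mul_one_div_cancel hdet, one_mul]; ring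

lemma trace_inv_eig (h : M.PosDef) : (M⁻¹).trace = 1 / eig1 M + 1 / eig2 M := by
  rw [trace_inv_eq h.det_pos.ne', ← eig_sum (M := M), ← eig_prod h.isHermitian]
  have h1 := (eig1_pos h).ne'
  have h2 := (eig2_pos h).ne'
  field_simp; ring

lemma scalar_lower {p1 p2 r1 r2 : ℝ} (hp2 : 0 < p2) (hp : p2 ≤ p1) (hr : r2 ≤ r1)
    (h1 : p1 ≤ r1) (h2 : p2 ≤ r2) :
    ((r1 + r2) - (p1 + p2)) / (p1 * r1) ≤ (1/p1 + 1/p2) - (1/r1 + 1/r2) := by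
  have hp1 : 0 < p1 := hp2.trans_le hp
  have hr1 : 0 < r1 := hp1.trans_le h1
  have hr2 : 0 < r2 := hp2.trans_le h2
  rw [div_le_iff₀ (by positivity)]
  have key : 0 ≤ (r2 - p2) * (p1 * r1 - p2 * r2) :=
    mul_nonneg (by linarith) (by nlinarith)
  have key2 : 0 ≤ (r2 - p2) * (p1 * r1 - p2 * r2) / (p2 * r2) :=
    div_nonneg key (by positivity)
  have expand : ((1/p1 + 1/p2) - (1/r1 + 1/r2)) * (p1 * r1) - ((r1 + r2) - (p1 + p2)) =
      (r2 - p2) * (p1 * r1 - p2 * r2) / (p2 * r2) := by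
    field_simp; ring
  linarith

lemma scalar_upper {p1 p2 r1 r2 : ℝ} (hp2 : 0 < p2) (hp : p2 ≤ p1) (hr : r2 ≤ r1)
    (h1 : p1 ≤ r1) (h2 : p2 ≤ r2) :
    (1/p1 + 1/p2) - (1/r1 + 1/r2) ≤ ((r1 + r2) - (p1 + p2)) / (p2 * r2) := by
  have hp1 : 0 < p1 := hp2.trans_le hp
  have hr1 : 0 < r1 := hp1.trans_le h1
  have hr2 : 0 < r2 := hp2.trans_le h2
  rw [le_div_iff₀ (by positivity)]
  have key : 0 ≤ (r1 - p1) * (p1 * r1 - p2 * r2) :=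
    mul_nonneg (by linarith) (by nlinarith)
  have key2 : 0 ≤ (r1 - p1) * (p1 * r1 - p2 * r2) / (p1 * r1) :=
    div_nonneg key (by positivity)
  have expand : ((r1 + r2) - (p1 + p2)) - ((1/p1 + 1/p2) - (1/r1 + 1/r2)) * (p2 * r2) =
      (r1 - p1) * (p1 * r1 - p2 * r2) / (p1 * r1) := by
    field_simp; ring
  linarith

end FPaAux
open FPaAux in
/-- Lemma 4 / Eq. (44): lower bound on the type-1 greedy
submodularity quantity of `f_Pa` at a set `Y ⊊ M̄`, where
`z ∈ argmin_{y∈M̄\Y} λ₂(F_p + H({y}∪Y))/λ₁(F_p + H({y}∪Y))`. -/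
theorem fPa_submodularity_ratio_lower_bound
    {ι : Type*} [Fintype ι] [DecidableEq ι]
    (Fp : Matrix (Fin 2) (Fin 2) ℝ) (H : ι → Matrix (Fin 2) (Fin 2) ℝ)
    (hFp : Fp.PosDef) (hH : ∀ y, (H y).PosSemidef)
    (Y : Finset ι) (hY : Y ⊂ Finset.univ)
    (z : ι) (hz : z ∉ Y)
    (hzmin : ∀ y ∉ Y,
      eig2 (Fp + ∑ w ∈ insert z Y, H w) / eig1 (Fp + ∑ w ∈ insert z Y, H w) ≤
        eig2 (Fp + ∑ w ∈ insert y Y, H w) / eig1 (Fp + ∑ w ∈ insert y Y, H w)) :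
    ∀ A : Finset ι,
      (eig2 (Fp + ∑ w ∈ Y, H w) * eig2 (Fp + ∑ w ∈ insert z Y, H w) /
          (eig1 (Fp + ∑ w ∈ Y, H w) * eig1 (Fp + ∑ w ∈ insert z Y, H w))) *
          (fPa Fp H (A ∪ Y) - fPa Fp H Y) ≤
        ∑ y ∈ A \ Y, (fPa Fp H (insert y Y) - fPa Fp H Y) := by
  intro A
  set F : Finset ι → Matrix (Fin 2) (Fin 2) ℝ := fun S => Fp + ∑ w ∈ S, H w with hFdef
  have goalEq : ∀ S : Finset ι, Fp + ∑ w ∈ S, H w = F S := fun S => rfl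
  simp only [goalEq] at hzmin ⊢
  -- basic positivity / hermitian facts
  have hpos : ∀ S : Finset ι, (F S).PosDef := fun S =>
    hFp.add_posSemidef (Finset.sum_induction H _ (fun a b ha hb => ha.add hb)
      Matrix.PosSemidef.zero (fun i _ => hH i))
  have hherm : ∀ S : Finset ι, (F S).IsHermitian := fun S => (hpos S).isHermitian
  have hsubpsd : ∀ S T : Finset ι, S ⊆ T → (F T - F S).PosSemidef := by
    intro S T hST
    have hEq : F T - F S = ∑ w ∈ T \ S, H w := by
      show (Fp + ∑ w ∈ T, H w) - (Fp + ∑ w ∈ S, H w) = _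
      rw [Finset.sum_sdiff_eq_sub hST]; abel
    rw [hEq]
    exact Finset.sum_induction H _ (fun a b ha hb => ha.add hb)
      Matrix.PosSemidef.zero (fun i _ => hH i)
  have hmono1 : ∀ S T : Finset ι, S ⊆ T → eig1 (F S) ≤ eig1 (F T) :=
    fun S T h => eig1_mono (hherm S) (hherm T) (hsubpsd S T h)
  have hmono2 : ∀ S T : Finset ι, S ⊆ T → eig2 (F S) ≤ eig2 (F T) :=
    fun S T h => eig2_mono (hherm S) (hherm T) (hsubpsd S T h)
  have he2pos : ∀ S : Finset ι, 0 < eig2 (F S) := fun S => eig2_pos (hpos S)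
  have he1pos : ∀ S : Finset ι, 0 < eig1 (F S) := fun S => eig1_pos (hpos S)
  have hee : ∀ S : Finset ι, eig2 (F S) ≤ eig1 (F S) := fun S => eig2_le_eig1
  have hfPa : ∀ S : Finset ι,
      fPa Fp H S = (Fp⁻¹).trace - (1 / eig1 (F S) + 1 / eig2 (F S)) := by
    intro S
    unfold fPa
    rw [goalEq S, trace_inv_eig (hpos S)]
  have htrF : ∀ S T : Finset ι, S ⊆ T →
      eig1 (F T) + eig2 (F T) - (eig1 (F S) + eig2 (F S)) = ∑ w ∈ T \ S, (H w).trace := by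
    intro S T h
    rw [eig_sum (M := F T), eig_sum (M := F S)]
    show (Fp + ∑ w ∈ T, H w).trace - (Fp + ∑ w ∈ S, H w).trace = _
    rw [Matrix.trace_add, Matrix.trace_add, Matrix.trace_sum, Matrix.trace_sum,
      Finset.sum_sdiff_eq_sub h]
    ring
  -- abbreviations
  have hYc : Y ⊆ A ∪ Y := Finset.subset_union_right
  -- upper bound on total difference
  have hup : fPa Fp H (A ∪ Y) - fPa Fp H Y ≤
      ((eig1 (F (A ∪ Y)) + eig2 (F (A ∪ Y))) - (eig1 (F Y) + eig2 (F Y))) /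
        (eig2 (F Y) * eig2 (F (A ∪ Y))) := by
    have hsc := scalar_upper (he2pos Y) (hee Y) (hee (A ∪ Y))
      (hmono1 Y (A ∪ Y) hYc) (hmono2 Y (A ∪ Y) hYc)
    rw [hfPa (A ∪ Y), hfPa Y]
    linarith
  -- per-element lower bound
  have hlow : ∀ y ∈ A \ Y,
      (H y).trace * eig2 (F (insert z Y)) /
        (eig1 (F Y) * eig1 (F (insert z Y)) * eig2 (F (A ∪ Y))) ≤
      fPa Fp H (insert y Y) - fPa Fp H Y := by
    intro y hy
    obtain ⟨hyA, hyY⟩ : y ∈ A ∧ y ∉ Y := by simpa [Finset.mem_sdiff] using hy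
    have hYsub : Y ⊆ insert y Y := Finset.subset_insert _ _
    have hb1 : eig1 (F Y) ≤ eig1 (F (insert y Y)) := hmono1 _ _ hYsub
    have hb2 : eig2 (F Y) ≤ eig2 (F (insert y Y)) := hmono2 _ _ hYsub
    have hins : insert y Y ⊆ A ∪ Y :=
      Finset.insert_subset (Finset.mem_union_left _ hyA) Finset.subset_union_right
    have hbc : eig2 (F (insert y Y)) ≤ eig2 (F (A ∪ Y)) := hmono2 _ _ hins
    have htry : (eig1 (F (insert y Y)) + eig2 (F (insert y Y))) -
        (eig1 (F Y) + eig2 (F Y)) = (H y).trace := by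
      have h := htrF Y (insert y Y) hYsub
      have hsd : insert y Y \ Y = {y} := by
        simp [Finset.insert_sdiff_of_notMem, hyY]
      rw [hsd, Finset.sum_singleton] at h
      exact h
    have s1 : ((eig1 (F (insert y Y)) + eig2 (F (insert y Y))) -
        (eig1 (F Y) + eig2 (F Y))) / (eig1 (F Y) * eig1 (F (insert y Y))) ≤
        fPa Fp H (insert y Y) - fPa Fp H Y := by
      have hsc := scalar_lower (he2pos Y) (hee Y) (hee (insert y Y)) hb1 hb2
      rw [hfPa (insert y Y), hfPa Y]
      linarith
    have hty : 0 ≤ (H y).trace := psd_trace_nonneg (hH y)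
    have hratio := hzmin y hyY
    have hcross : eig2 (F (insert z Y)) * eig1 (F (insert y Y)) ≤
        eig2 (F (insert y Y)) * eig1 (F (insert z Y)) := by
      rw [div_le_div_iff₀ (he1pos _) (he1pos _)] at hratio
      exact hratio
    have h1 : eig2 (F (insert z Y)) * eig1 (F (insert y Y)) ≤
        eig1 (F (insert z Y)) * eig2 (F (A ∪ Y)) := by
      have h2 := mul_le_mul_of_nonneg_right hbc (he1pos (insert z Y)).le
      nlinarith [hcross, h2]
    have hkey : (H y).trace * eig2 (F (insert z Y)) /
        (eig1 (F Y) * eig1 (F (insert z Y)) * eig2 (F (A ∪ Y))) ≤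
        (H y).trace / (eig1 (F Y) * eig1 (F (insert y Y))) := by
      rw [div_le_div_iff₀
        (by exact mul_pos (mul_pos (he1pos Y) (he1pos _)) (he2pos _))
        (mul_pos (he1pos Y) (he1pos _))]
      nlinarith [mul_le_mul_of_nonneg_left h1 (mul_nonneg hty (he1pos Y).le)]
    rw [← htry] at hkey ⊢
    linarith
  -- sum the per-element bounds
  have hsum_low : (∑ w ∈ A \ Y, (H w).trace) * eig2 (F (insert z Y)) /
      (eig1 (F Y) * eig1 (F (insert z Y)) * eig2 (F (A ∪ Y))) ≤
      ∑ y ∈ A \ Y, (fPa Fp H (insert y Y) - fPa Fp H Y) := by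
    rw [Finset.sum_mul, Finset.sum_div]
    exact Finset.sum_le_sum hlow
  have hT : (eig1 (F (A ∪ Y)) + eig2 (F (A ∪ Y))) - (eig1 (F Y) + eig2 (F Y)) =
      ∑ w ∈ A \ Y, (H w).trace := by
    have h := htrF Y (A ∪ Y) hYc
    rwa [Finset.union_sdiff_right A Y] at h
  -- put everything together
  have hconst : 0 ≤ eig2 (F Y) * eig2 (F (insert z Y)) /
      (eig1 (F Y) * eig1 (F (insert z Y))) :=
    div_nonneg (mul_nonneg (he2pos Y).le (he2pos _).le)
      (mul_nonneg (he1pos Y).le (he1pos _).le)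
  set T : ℝ := ∑ w ∈ A \ Y, (H w).trace with hTdef
  calc (eig2 (F Y) * eig2 (F (insert z Y)) / (eig1 (F Y) * eig1 (F (insert z Y)))) *
          (fPa Fp H (A ∪ Y) - fPa Fp H Y)
      ≤ (eig2 (F Y) * eig2 (F (insert z Y)) / (eig1 (F Y) * eig1 (F (insert z Y)))) *
          (T / (eig2 (F Y) * eig2 (F (A ∪ Y)))) := by
        apply mul_le_mul_of_nonneg_left _ hconst
        rw [hT] at hup
        exact hup
    _ = T * eig2 (F (insert z Y)) /
          (eig1 (F Y) * eig1 (F (insert z Y)) * eig2 (F (A ∪ Y))) := by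
        have h1 := (he1pos Y).ne'
        have h2 := (he1pos (insert z Y)).ne'
        have h3 := (he2pos Y).ne'
        have h4 := (he2pos (A ∪ Y)).ne'
        field_simp
    _ ≤ ∑ y ∈ A \ Y, (fPa Fp H (insert y Y) - fPa Fp H Y) := hsum_low
end

section
/- Let M̄ be a finite set, F_p a 2×2 real symmetric positive definite matrix, and for each y ∈ M̄ let H_y be a 2×2 real symmetric positive semidefinite matrix; write H(Y) = ∑_{y∈Y} H_y. Let Y ⊆ M̄ and A ⊆ M̄ with A \ Y ≠ ∅, and let z' ∈ argmax_{y ∈ A\Y} λ₁(F_p + H({y} ∪ Y)). Then Tr((F_p + H(Y))⁻¹) − Tr((F_p + H(A ∪ Y))⁻¹) ≤ ( ∑_{y ∈ A\Y} Tr(H_y) ) / ( λ₂(F_p + H(Y)) · λ₂(F_p + H({z'} ∪ Y)) ). -/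
open Matrix

namespace EigAux

lemma entry_symm {M : Matrix (Fin 2) (Fin 2) ℝ} (h : M.IsHermitian) : M 1 0 = M 0 1 := by
  have := congrFun (congrFun h.eq 0) 1
  simpa [conjTranspose_apply] using this

lemma qf_eval (M : Matrix (Fin 2) (Fin 2) ℝ) (x : Fin 2 → ℝ) :
    dotProduct (star x) (M *ᵥ x) =
      M 0 0 * x 0 ^ 2 + (M 0 1 + M 1 0) * (x 0 * x 1) + M 1 1 * x 1 ^ 2 := by
  simp [dotProduct, mulVec, Fin.sum_univ_two]
  ring

lemma psd_diag₀ {M : Matrix (Fin 2) (Fin 2) ℝ} (h : M.PosSemidef) : 0 ≤ M 0 0 := by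
  have := h.dotProduct_mulVec_nonneg ![1, 0]
  rw [qf_eval] at this
  simpa using this

lemma psd_diag₁ {M : Matrix (Fin 2) (Fin 2) ℝ} (h : M.PosSemidef) : 0 ≤ M 1 1 := by
  have := h.dotProduct_mulVec_nonneg ![0, 1]
  rw [qf_eval] at this
  simpa using this

lemma psd_trace_nonneg {M : Matrix (Fin 2) (Fin 2) ℝ} (h : M.PosSemidef) : 0 ≤ M.trace := by
  rw [trace_fin_two]
  have h0 := psd_diag₀ h; have h1 := psd_diag₁ h; linarith

lemma psd_det_nonneg {M : Matrix (Fin 2) (Fin 2) ℝ} (h : M.PosSemidef) : 0 ≤ M.det := by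
  have hb := entry_symm h.1
  have ha : 0 ≤ M 0 0 := psd_diag₀ h
  have hd : 0 ≤ M 1 1 := psd_diag₁ h
  have h1 : 0 ≤ M 0 0 * (M 0 0 * M 1 1 - M 0 1 ^ 2) := by
    have := h.dotProduct_mulVec_nonneg ![M 0 1, -(M 0 0)]
    rw [qf_eval] at this
    simp only [Matrix.cons_val_zero, Matrix.cons_val_one, Matrix.head_cons] at this
    rw [hb] at this
    nlinarith [this]
  have h2 : 0 ≤ M 1 1 * (M 0 0 * M 1 1 - M 0 1 ^ 2) := by
    have := h.dotProduct_mulVec_nonneg ![M 1 1, -(M 0 1)]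
    rw [qf_eval] at this
    simp only [Matrix.cons_val_zero, Matrix.cons_val_one, Matrix.head_cons] at this
    rw [hb] at this
    nlinarith [this]
  rw [det_fin_two, hb]
  rcases eq_or_lt_of_le (by linarith : (0:ℝ) ≤ M 0 0 + M 1 1) with hs | hs
  · have ha0 : M 0 0 = 0 := by linarith
    have hd0 : M 1 1 = 0 := by linarith
    have hplus := h.dotProduct_mulVec_nonneg ![1, 1]
    have hminus := h.dotProduct_mulVec_nonneg ![1, -1]
    rw [qf_eval] at hplus hminus
    simp only [Matrix.cons_val_zero, Matrix.cons_val_one, Matrix.head_cons] at hplus hminus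
    have hb0 : M 0 1 = 0 := by nlinarith
    rw [ha0, hb0]; simp
  · nlinarith

lemma psd_of {M : Matrix (Fin 2) (Fin 2) ℝ} (hsym : M 1 0 = M 0 1)
    (htr : 0 ≤ M.trace) (hdet : 0 ≤ M.det) : M.PosSemidef := by
  rw [trace_fin_two] at htr
  rw [det_fin_two, hsym] at hdet
  have ha : 0 ≤ M 0 0 := by nlinarith [sq_nonneg (M 0 1)]
  have hd : 0 ≤ M 1 1 := by nlinarith [sq_nonneg (M 0 1)]
  refine Matrix.PosSemidef.of_dotProduct_mulVec_nonneg ?_ ?_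
  · ext i j
    fin_cases i <;> fin_cases j <;> simp [conjTranspose_apply, hsym]
  · intro x
    rw [qf_eval, hsym]
    rcases eq_or_lt_of_le ha with h0 | h0
    · have hb0 : M 0 1 = 0 := by nlinarith [sq_nonneg (M 0 1)]
      rw [hb0, ← h0]
      nlinarith [mul_nonneg hd (sq_nonneg (x 1))]
    · nlinarith [sq_nonneg (M 0 0 * x 0 + M 0 1 * x 1),
        mul_nonneg hdet (sq_nonneg (x 1))]

lemma disc_nonneg {M : Matrix (Fin 2) (Fin 2) ℝ} (h : M 1 0 = M 0 1) :
    0 ≤ M.trace ^ 2 - 4 * M.det := by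
  rw [trace_fin_two, det_fin_two, h]
  nlinarith [sq_nonneg (M 0 0 - M 1 1), sq_nonneg (M 0 1)]

lemma sqrt_disc_sq {M : Matrix (Fin 2) (Fin 2) ℝ} (h : M 1 0 = M 0 1) :
    Real.sqrt (M.trace ^ 2 - 4 * M.det) ^ 2 = M.trace ^ 2 - 4 * M.det :=
  Real.sq_sqrt (disc_nonneg h)

lemma eig1_add_eig2 (M : Matrix (Fin 2) (Fin 2) ℝ) : eig1 M + eig2 M = M.trace := by
  unfold eig1 eig2; ring

lemma eig1_mul_eig2 {M : Matrix (Fin 2) (Fin 2) ℝ} (h : M 1 0 = M 0 1) :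
    eig1 M * eig2 M = M.det := by
  have hs := sqrt_disc_sq h
  unfold eig1 eig2
  nlinarith [hs]

lemma eig2_le_eig1 (M : Matrix (Fin 2) (Fin 2) ℝ) : eig2 M ≤ eig1 M := by
  unfold eig1 eig2
  have := Real.sqrt_nonneg (M.trace ^ 2 - 4 * M.det)
  linarith

lemma trace_shift (M : Matrix (Fin 2) (Fin 2) ℝ) (t : ℝ) :
    (M - t • (1 : Matrix (Fin 2) (Fin 2) ℝ)).trace = M.trace - 2 * t := by
  simp [trace_sub, trace_smul, trace_one]
  ring

lemma det_shift (M : Matrix (Fin 2) (Fin 2) ℝ) (t : ℝ) :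
    (M - t • (1 : Matrix (Fin 2) (Fin 2) ℝ)).det = M.det - t * M.trace + t ^ 2 := by
  rw [det_fin_two, det_fin_two, trace_fin_two]
  simp [Matrix.sub_apply, Matrix.smul_apply, Matrix.one_apply]
  ring

lemma le_eig2 {M : Matrix (Fin 2) (Fin 2) ℝ} (t : ℝ)
    (h : (M - t • (1 : Matrix (Fin 2) (Fin 2) ℝ)).PosSemidef) : t ≤ eig2 M := by
  have htr : 0 ≤ M.trace - 2 * t := by
    have := psd_trace_nonneg h; rwa [trace_shift] at this
  have hdet : 0 ≤ M.det - t * M.trace + t ^ 2 := by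
    have := psd_det_nonneg h; rwa [det_shift] at this
  have hle : Real.sqrt (M.trace ^ 2 - 4 * M.det) ≤ M.trace - 2 * t := by
    have h1 : M.trace ^ 2 - 4 * M.det ≤ (M.trace - 2 * t) ^ 2 := by nlinarith
    calc Real.sqrt (M.trace ^ 2 - 4 * M.det) ≤ Real.sqrt ((M.trace - 2 * t) ^ 2) :=
          Real.sqrt_le_sqrt h1
      _ = M.trace - 2 * t := Real.sqrt_sq htr
  unfold eig2; linarith

lemma trace_shift' (M : Matrix (Fin 2) (Fin 2) ℝ) (t : ℝ) :
    (t • (1 : Matrix (Fin 2) (Fin 2) ℝ) - M).trace = 2 * t - M.trace := by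
  simp [trace_sub, trace_smul, trace_one]
  ring

lemma det_shift' (M : Matrix (Fin 2) (Fin 2) ℝ) (t : ℝ) :
    (t • (1 : Matrix (Fin 2) (Fin 2) ℝ) - M).det = M.det - t * M.trace + t ^ 2 := by
  rw [det_fin_two, det_fin_two, trace_fin_two]
  simp [Matrix.sub_apply, Matrix.smul_apply, Matrix.one_apply]
  ring

lemma eig1_le {M : Matrix (Fin 2) (Fin 2) ℝ} (t : ℝ)
    (h : (t • (1 : Matrix (Fin 2) (Fin 2) ℝ) - M).PosSemidef) : eig1 M ≤ t := by
  have htr : 0 ≤ 2 * t - M.trace := by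
    have := psd_trace_nonneg h; rwa [trace_shift'] at this
  have hdet : 0 ≤ M.det - t * M.trace + t ^ 2 := by
    have := psd_det_nonneg h; rwa [det_shift'] at this
  have hle : Real.sqrt (M.trace ^ 2 - 4 * M.det) ≤ 2 * t - M.trace := by
    have h1 : M.trace ^ 2 - 4 * M.det ≤ (2 * t - M.trace) ^ 2 := by nlinarith
    calc Real.sqrt (M.trace ^ 2 - 4 * M.det) ≤ Real.sqrt ((2 * t - M.trace) ^ 2) :=
          Real.sqrt_le_sqrt h1
      _ = 2 * t - M.trace := Real.sqrt_sq htr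
  unfold eig1; linarith

lemma entry_shift_symm (M : Matrix (Fin 2) (Fin 2) ℝ) (t : ℝ) (h : M 1 0 = M 0 1) :
    (M - t • (1 : Matrix (Fin 2) (Fin 2) ℝ)) 1 0 =
      (M - t • (1 : Matrix (Fin 2) (Fin 2) ℝ)) 0 1 := by
  simp [Matrix.sub_apply, Matrix.smul_apply, Matrix.one_apply, h]

lemma shift_eig2_psd {M : Matrix (Fin 2) (Fin 2) ℝ} (h : M.IsHermitian) :
    (M - eig2 M • (1 : Matrix (Fin 2) (Fin 2) ℝ)).PosSemidef := by
  have hb := entry_symm h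
  have hs := sqrt_disc_sq hb
  apply psd_of (entry_shift_symm M _ hb)
  · rw [trace_shift]
    have : M.trace - 2 * eig2 M = Real.sqrt (M.trace ^ 2 - 4 * M.det) := by
      unfold eig2; ring
    rw [this]; exact Real.sqrt_nonneg _
  · rw [det_shift]
    have : M.det - eig2 M * M.trace + eig2 M ^ 2 = 0 := by
      unfold eig2; nlinarith [hs]
    linarith [this]

lemma shift_eig1_psd {M : Matrix (Fin 2) (Fin 2) ℝ} (h : M.IsHermitian) :
    (eig1 M • (1 : Matrix (Fin 2) (Fin 2) ℝ) - M).PosSemidef := by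
  have hb := entry_symm h
  have hs := sqrt_disc_sq hb
  apply psd_of
  · simp [Matrix.sub_apply, Matrix.smul_apply, Matrix.one_apply, hb]
  · rw [trace_shift']
    have : 2 * eig1 M - M.trace = Real.sqrt (M.trace ^ 2 - 4 * M.det) := by
      unfold eig1; ring
    rw [this]; exact Real.sqrt_nonneg _
  · rw [det_shift']
    have : M.det - eig1 M * M.trace + eig1 M ^ 2 = 0 := by
      unfold eig1; nlinarith [hs]
    linarith [this]

lemma eig2_mono {P E : Matrix (Fin 2) (Fin 2) ℝ} (hP : P.IsHermitian)
    (hE : E.PosSemidef) : eig2 P ≤ eig2 (P + E) := by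
  apply le_eig2
  have hrw : P + E - eig2 P • (1 : Matrix (Fin 2) (Fin 2) ℝ) =
      (P - eig2 P • (1 : Matrix (Fin 2) (Fin 2) ℝ)) + E := by abel
  rw [hrw]
  exact (shift_eig2_psd hP).add hE

lemma eig1_mono {P E : Matrix (Fin 2) (Fin 2) ℝ} (hP : P.IsHermitian)
    (hE : E.PosSemidef) : eig1 P ≤ eig1 (P + E) := by
  apply eig1_le
  have h1 := shift_eig1_psd (hP.add hE.1)
  have hrw : eig1 (P + E) • (1 : Matrix (Fin 2) (Fin 2) ℝ) - P =
      (eig1 (P + E) • (1 : Matrix (Fin 2) (Fin 2) ℝ) - (P + E)) + E := by abel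
  rw [hrw]
  exact h1.add hE

lemma eig2_pos {M : Matrix (Fin 2) (Fin 2) ℝ} (hM : M.PosDef) : 0 < eig2 M := by
  have hdet : 0 < M.det := hM.det_pos
  have h00 : 0 < M 0 0 := by
    have hx : (![1, 0] : Fin 2 → ℝ) ≠ 0 := by
      intro h; have := congrFun h 0; simp at this
    have := hM.dotProduct_mulVec_pos hx
    rw [qf_eval] at this
    simpa using this
  have h11 : 0 < M 1 1 := by
    have hx : (![0, 1] : Fin 2 → ℝ) ≠ 0 := by
      intro h; have := congrFun h 1; simp at this
    have := hM.dotProduct_mulVec_pos hx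
    rw [qf_eval] at this
    simpa using this
  have htr : 0 < M.trace := by rw [trace_fin_two]; linarith
  have hlt : Real.sqrt (M.trace ^ 2 - 4 * M.det) < M.trace := by
    rw [Real.sqrt_lt' htr]; linarith
  unfold eig2; linarith

lemma trace_inv {M : Matrix (Fin 2) (Fin 2) ℝ} : M⁻¹.trace = M.trace / M.det := by
  rw [inv_def, trace_smul, adjugate_fin_two, trace_fin_two, trace_fin_two]
  simp [Ring.inverse_eq_inv', smul_eq_mul]
  ring

lemma psd_sum {ι : Type*} (s : Finset ι) (H : ι → Matrix (Fin 2) (Fin 2) ℝ)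
    (hH : ∀ y, (H y).PosSemidef) : (∑ w ∈ s, H w).PosSemidef := by
  classical
  induction s using Finset.induction_on with
  | empty =>
      rw [Finset.sum_empty]
      exact ⟨Matrix.isHermitian_zero, fun x => by simp⟩
  | insert _ _ hx ih =>
      rw [Finset.sum_insert hx]
      exact (hH _).add ih

end EigAux

/-- Eqs. (42)–(43) in the proof of Lemma 4: upper bound on
`Tr((F_p+H(Y))⁻¹) − Tr((F_p+H(A∪Y))⁻¹)`, where
`z' ∈ argmax_{y∈A\Y} λ₁(F_p + H({y}∪Y))`. -/
theorem fPa_union_gain_upper_bound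
    {ι : Type*} [Fintype ι] [DecidableEq ι]
    (Fp : Matrix (Fin 2) (Fin 2) ℝ) (H : ι → Matrix (Fin 2) (Fin 2) ℝ)
    (hFp : Fp.PosDef) (hH : ∀ y, (H y).PosSemidef)
    (Y A : Finset ι) (hAY : (A \ Y).Nonempty)
    (z' : ι) (hz' : z' ∈ A \ Y)
    (hz'max : ∀ y ∈ A \ Y,
      eig1 (Fp + ∑ w ∈ insert y Y, H w) ≤ eig1 (Fp + ∑ w ∈ insert z' Y, H w)) :
    (Fp + ∑ w ∈ Y, H w)⁻¹.trace - (Fp + ∑ w ∈ A ∪ Y, H w)⁻¹.trace ≤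
      (∑ y ∈ A \ Y, (H y).trace) /
        (eig2 (Fp + ∑ w ∈ Y, H w) * eig2 (Fp + ∑ w ∈ insert z' Y, H w)) := by
  classical
  set P := Fp + ∑ w ∈ Y, H w with hPdef
  set Q := Fp + ∑ w ∈ A ∪ Y, H w with hQdef
  set Q' := Fp + ∑ w ∈ insert z' Y, H w with hQ'def
  set E1 := ∑ w ∈ A \ Y, H w with hE1def
  set E2 := ∑ w ∈ (A ∪ Y) \ insert z' Y, H w with hE2def
  have hE1psd : E1.PosSemidef := EigAux.psd_sum _ H hH
  have hE2psd : E2.PosSemidef := EigAux.psd_sum _ H hH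
  have hPpd : P.PosDef := hFp.add_posSemidef (EigAux.psd_sum _ H hH)
  have hQpd : Q.PosDef := hFp.add_posSemidef (EigAux.psd_sum _ H hH)
  have hQ'pd : Q'.PosDef := hFp.add_posSemidef (EigAux.psd_sum _ H hH)
  -- decompositions
  have hsumU : ∑ w ∈ A ∪ Y, H w = E1 + ∑ w ∈ Y, H w := by
    rw [hE1def, ← Finset.sum_union Finset.sdiff_disjoint, Finset.sdiff_union_self_eq_union]
  have hQP : Q = P + E1 := by rw [hQdef, hPdef, hsumU]; abel
  have hsub : insert z' Y ⊆ A ∪ Y := by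
    intro x hx
    rcases Finset.mem_insert.mp hx with h | h
    · subst h
      exact Finset.mem_union_left _ (Finset.mem_sdiff.mp hz').1
    · exact Finset.mem_union_right _ h
  have hQQ' : Q = Q' + E2 := by
    rw [hQdef, hQ'def, hE2def, ← Finset.sum_sdiff hsub]; abel
  -- eigenvalue notation
  set p1 := eig1 P; set p2 := eig2 P
  set q1 := eig1 Q; set q2 := eig2 Q
  set r2 := eig2 Q'
  have hp2 : 0 < p2 := EigAux.eig2_pos hPpd
  have hr2 : 0 < r2 := EigAux.eig2_pos hQ'pd
  have hp21 : p2 ≤ p1 := EigAux.eig2_le_eig1 P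
  have hq21 : q2 ≤ q1 := EigAux.eig2_le_eig1 Q
  have hp1q1 : p1 ≤ q1 := by
    have h := EigAux.eig1_mono hPpd.1 hE1psd
    rw [← hQP] at h; exact h
  have hp2q2 : p2 ≤ q2 := by
    have h := EigAux.eig2_mono hPpd.1 hE1psd
    rw [← hQP] at h; exact h
  have hr2q2 : r2 ≤ q2 := by
    have h := EigAux.eig2_mono hQ'pd.1 hE2psd
    rw [← hQQ'] at h; exact h
  have hp1 : 0 < p1 := lt_of_lt_of_le hp2 hp21
  have hq2 : 0 < q2 := lt_of_lt_of_le hr2 hr2q2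
  have hq1 : 0 < q1 := lt_of_lt_of_le hq2 hq21
  -- trace of inverses
  have hPsum : p1 + p2 = P.trace := EigAux.eig1_add_eig2 P
  have hPprod : p1 * p2 = P.det := EigAux.eig1_mul_eig2 (EigAux.entry_symm hPpd.1)
  have hQsum : q1 + q2 = Q.trace := EigAux.eig1_add_eig2 Q
  have hQprod : q1 * q2 = Q.det := EigAux.eig1_mul_eig2 (EigAux.entry_symm hQpd.1)
  have hPinv : P⁻¹.trace = (p1 + p2) / (p1 * p2) := by
    rw [EigAux.trace_inv, hPsum, hPprod]
  have hQinv : Q⁻¹.trace = (q1 + q2) / (q1 * q2) := by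
    rw [EigAux.trace_inv, hQsum, hQprod]
  -- trace difference equals sum of traces
  have htrE1 : E1.trace = ∑ y ∈ A \ Y, (H y).trace := Matrix.trace_sum _ _
  have htrQP : Q.trace = P.trace + E1.trace := by rw [hQP, trace_add]
  have hnum : ∑ y ∈ A \ Y, (H y).trace = (q1 + q2) - (p1 + p2) := by
    rw [← htrE1, hPsum, hQsum]; linarith [htrQP]
  rw [hPinv, hQinv, hnum]
  -- scalar inequality
  have key1 : (p1 + p2) / (p1 * p2) - (q1 + q2) / (q1 * q2)
      = (q1 - p1) / (p1 * q1) + (q2 - p2) / (p2 * q2) := by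
    field_simp
    ring
  rw [key1]
  have hd1 : (q1 - p1) / (p1 * q1) ≤ (q1 - p1) / (p2 * r2) := by
    apply div_le_div_of_nonneg_left (by linarith) (by positivity)
    nlinarith
  have hd2 : (q2 - p2) / (p2 * q2) ≤ (q2 - p2) / (p2 * r2) := by
    apply div_le_div_of_nonneg_left (by linarith) (by positivity)
    nlinarith
  have : (q1 - p1) / (p2 * r2) + (q2 - p2) / (p2 * r2)
      = (q1 + q2 - (p1 + p2)) / (p2 * r2) := by
    rw [← add_div]; ring_nf
  linarith [hd1, hd2, this.le, this.ge]
end
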